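/- arXiv:2305.07860 — 3 statements merged into one kernel-verified Lean document; each statement's English description precedes it below -/
import Mathlib

section
/- Fix a positive integer k and let p_1,…,p_k be the first k primes, q = p_1⋯p_k, and E_k = {m ∈ ℕ : gcd(m, q) = 1}. Let (a_N)_{N≥0} be a real sequence with a_0 = 0 such that a_N/(log N)^k converges as N → ∞. Then lim_{N→∞} (1/N) Σ_{m ∈ E_k} a_{⌊N/m⌋} exists and equals ((p_1−1)⋯(p_k−1)/(p_1⋯p_k)) · ∫_0^1 a_{⌊1/x⌋} dx. -/
open Filter MeasureTheory Topology

namespace Folner4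

noncomputable def P (j : ℕ) : ℕ := Nat.nth Nat.Prime j

noncomputable def Q (k : ℕ) : ℕ := ∏ j ∈ Finset.range k, P j

noncomputable def cnt (k j : ℕ) : ℕ :=
  ((Finset.Ioc 0 j).filter (fun m => Nat.Coprime (Q k) m)).card

noncomputable def del (k : ℕ) : ℝ := ((Q k).totient : ℝ) / (Q k)

lemma P_prime (j : ℕ) : Nat.Prime (P j) := Nat.prime_nth_prime j

lemma P_inj : Function.Injective P := Nat.nth_injective Nat.infinite_setOf_prime

lemma Q_pos (k : ℕ) : 0 < Q k :=
  Finset.prod_pos fun j _ => (P_prime j).pos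

lemma coprime_Q_P (k : ℕ) : Nat.Coprime (Q k) (P k) := by
  apply Nat.Coprime.prod_left
  intro j hj
  exact (Nat.coprime_primes (P_prime j) (P_prime k)).mpr
    (fun h => (Finset.mem_range.mp hj).ne (P_inj h))

lemma totient_Q (k : ℕ) : (Q k).totient = ∏ j ∈ Finset.range k, (P j - 1) := by
  induction k with
  | zero => simp [Q]
  | succ k ih =>
    rw [Q, Finset.prod_range_succ, ← Q, Nat.totient_mul (coprime_Q_P k),
      Finset.prod_range_succ, ih, Nat.totient_prime (P_prime k)]

lemma del_nonneg (k : ℕ) : 0 ≤ del k := by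
  unfold del; positivity

lemma del_le_one (k : ℕ) : del k ≤ 1 := by
  rw [del, div_le_one (by exact_mod_cast Q_pos k)]
  exact_mod_cast Nat.totient_le _

lemma cnt_mono (k : ℕ) {i j : ℕ} (h : i ≤ j) : cnt k i ≤ cnt k j :=
  Finset.card_le_card (Finset.filter_subset_filter _ (Finset.Ioc_subset_Ioc le_rfl h))

lemma cnt_split (k : ℕ) {i j : ℕ} (h : i ≤ j) :
    cnt k j = cnt k i + ((Finset.Ioc i j).filter (fun m => Nat.Coprime (Q k) m)).card := by
  unfold cnt
  rw [← Finset.card_union_of_disjoint, ← Finset.filter_union,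
    Finset.Ioc_union_Ioc_eq_Ioc (Nat.zero_le i) h]
  refine Finset.disjoint_filter_filter (Finset.disjoint_left.mpr fun m h1 h2 => ?_)
  simp only [Finset.mem_Ioc] at h1 h2
  omega

lemma cnt_period (k t : ℕ) : cnt k (Q k * t) = t * (Q k).totient := by
  induction t with
  | zero => simp [cnt]
  | succ t ih =>
    have h1 : Q k * t ≤ Q k * (t + 1) := Nat.mul_le_mul_left _ (Nat.le_succ t)
    rw [cnt_split k h1, ih]
    have : Finset.Ioc (Q k * t) (Q k * (t + 1)) =
        Finset.Ico (Q k * t + 1) (Q k * t + 1 + Q k) := by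
      rw [← Finset.Icc_add_one_left_eq_Ioc, ← Finset.Ico_add_one_right_eq_Icc]
      congr 1
      ring
    rw [this, Nat.filter_coprime_Ico_eq_totient (Q k) (Q k * t + 1)]
    ring

lemma cnt_near (k j : ℕ) : |(cnt k j : ℝ) - del k * j| ≤ Q k := by
  have hq0 : 0 < Q k := Q_pos k
  have hq0R : (0:ℝ) < (Q k : ℝ) := by exact_mod_cast hq0
  have hle1 : Q k * (j / Q k) ≤ j := Nat.mul_div_le j (Q k)
  have hle2 : j ≤ Q k * (j / Q k + 1) := by
    have h := Nat.lt_div_mul_add (a := j) hq0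
    calc j ≤ j / Q k * Q k + Q k := le_of_lt h
      _ = Q k * (j / Q k + 1) := by ring
  have hlow : (((j / Q k) * (Q k).totient : ℕ) : ℝ) ≤ cnt k j := by
    exact_mod_cast cnt_period k (j / Q k) ▸ cnt_mono k hle1
  have hhigh : (cnt k j : ℝ) ≤ (((j / Q k + 1) * (Q k).totient : ℕ) : ℝ) := by
    have := cnt_period k (j / Q k + 1) ▸ cnt_mono k hle2
    exact_mod_cast this
  have hφq : ((Q k).totient : ℝ) ≤ Q k := by exact_mod_cast Nat.totient_le (Q k)
  have key : ∀ i : ℕ, del k * (Q k * i : ℕ) = (i : ℝ) * (Q k).totient := by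
    intro i
    rw [del]
    push_cast
    field_simp
  have hdlow : (((j / Q k) * (Q k).totient : ℕ) : ℝ) ≤ del k * j := by
    have h2 := key (j / Q k)
    push_cast at h2 ⊢
    rw [← h2]
    exact mul_le_mul_of_nonneg_left (by exact_mod_cast hle1) (del_nonneg k)
  have hdhigh : del k * j ≤ (((j / Q k + 1) * (Q k).totient : ℕ) : ℝ) := by
    have h2 := key (j / Q k + 1)
    push_cast at h2 ⊢
    rw [← h2]
    exact mul_le_mul_of_nonneg_left (by exact_mod_cast hle2) (del_nonneg k)
  rw [abs_le]
  push_cast at hlow hhigh hdlow hdhigh ⊢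
  constructor <;> nlinarith [hlow, hhigh, hdlow, hdhigh, hφq]

lemma regroup (k : ℕ) (b : ℕ → ℝ) (N M : ℕ) :
    ∑ m ∈ (Finset.Ioc 0 (N / (M + 1))).filter (fun m => Nat.Coprime (Q k) m), b (N / m)
      = ∑ n ∈ Finset.Ioc M N, b n * ((cnt k (N / n) : ℝ) - cnt k (N / (n + 1))) := by
  have hmaps : ∀ m ∈ (Finset.Ioc 0 (N / (M + 1))).filter (fun m => Nat.Coprime (Q k) m),
      N / m ∈ Finset.Ioc M N := by
    intro m hm
    obtain ⟨hm1, _⟩ := Finset.mem_filter.mp hm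
    obtain ⟨hm0, hmT⟩ := Finset.mem_Ioc.mp hm1
    refine Finset.mem_Ioc.mpr ⟨?_, Nat.div_le_self N m⟩
    have h1 : m * (M + 1) ≤ N := (Nat.le_div_iff_mul_le (Nat.succ_pos M)).mp hmT
    have := (Nat.le_div_iff_mul_le hm0).mpr (by linarith [h1] : (M + 1) * m ≤ N)
    omega
  rw [← Finset.sum_fiberwise_of_maps_to hmaps (fun m => b (N / m))]
  refine Finset.sum_congr rfl fun n hn => ?_
  obtain ⟨hMn, hnN⟩ := Finset.mem_Ioc.mp hn
  have hn0 : 0 < n := Nat.lt_of_le_of_lt (Nat.zero_le M) hMn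
  have hfib : ((Finset.Ioc 0 (N / (M + 1))).filter (fun m => Nat.Coprime (Q k) m)).filter
      (fun m => N / m = n)
      = (Finset.Ioc (N / (n + 1)) (N / n)).filter (fun m => Nat.Coprime (Q k) m) := by
    ext m
    simp only [Finset.mem_filter, Finset.mem_Ioc]
    constructor
    · rintro ⟨⟨⟨hm0, hmT⟩, hcop⟩, hdiv⟩
      refine ⟨⟨?_, ?_⟩, hcop⟩
      · by_contra h
        push_neg at h
        have : n + 1 ≤ N / m := (Nat.le_div_iff_mul_le hm0).mpr
          (by
            have := (Nat.le_div_iff_mul_le (Nat.succ_pos n)).mp h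
            linarith)
        omega
      · have : n * m ≤ N := hdiv ▸ Nat.div_mul_le_self N m
        exact (Nat.le_div_iff_mul_le hn0).mpr (by linarith)
    · rintro ⟨⟨hlow, hup⟩, hcop⟩
      have hm0 : 0 < m := Nat.lt_of_le_of_lt (Nat.zero_le _) hlow
      have hmn : m * n ≤ N := (Nat.le_div_iff_mul_le hn0).mp hup
      have h1 : n ≤ N / m := (Nat.le_div_iff_mul_le hm0).mpr (by linarith)
      have h2 : N / m < n + 1 := by
        by_contra h
        push_neg at h
        have : m ≤ N / (n + 1) := (Nat.le_div_iff_mul_le (Nat.succ_pos n)).mpr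
          (by
            have := (Nat.le_div_iff_mul_le hm0).mp h
            linarith)
        omega
      refine ⟨⟨⟨hm0, ?_⟩, hcop⟩, by omega⟩
      calc m ≤ N / n := hup
        _ ≤ N / (M + 1) := Nat.div_le_div_left hMn (Nat.succ_pos M)
  have hdivle : N / (n + 1) ≤ N / n := Nat.div_le_div_left (Nat.le_succ n) hn0
  have hcard : (((Finset.Ioc (N / (n + 1)) (N / n)).filter
      (fun m => Nat.Coprime (Q k) m)).card : ℝ)
      = (cnt k (N / n) : ℝ) - cnt k (N / (n + 1)) := by
    have := cnt_split k hdivle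
    have h' : ((cnt k (N / n) : ℝ)) = (cnt k (N / (n + 1)) : ℝ) +
        (((Finset.Ioc (N / (n + 1)) (N / n)).filter (fun m => Nat.Coprime (Q k) m)).card : ℝ) := by
      exact_mod_cast congrArg (Nat.cast : ℕ → ℝ) this
    linarith
  calc ∑ m ∈ ((Finset.Ioc 0 (N / (M + 1))).filter (fun m => Nat.Coprime (Q k) m)).filter
        (fun m => N / m = n), b (N / m)
      = ∑ m ∈ ((Finset.Ioc 0 (N / (M + 1))).filter (fun m => Nat.Coprime (Q k) m)).filter
        (fun m => N / m = n), b n := by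
        refine Finset.sum_congr rfl fun m hm => ?_
        rw [(Finset.mem_filter.mp hm).2]
    _ = b n * ((cnt k (N / n) : ℝ) - cnt k (N / (n + 1))) := by
        rw [Finset.sum_const, hfib, nsmul_eq_mul, hcard, mul_comm]


/-! ### Analysis lemmas -/

noncomputable def mu (n : ℕ) : ℝ := 1 / (n : ℝ) - 1 / ((n : ℝ) + 1)

lemma mu_nonneg (n : ℕ) (hn : 0 < n) : 0 ≤ mu n := by
  have h1 : (0:ℝ) < n := by exact_mod_cast hn
  have h2 : (n:ℝ) ≤ (n:ℝ) + 1 := by linarith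
  unfold mu
  have := one_div_le_one_div_of_le h1 h2
  linarith

lemma mu_le_sq (n : ℕ) (hn : 0 < n) : mu n ≤ 1 / (n : ℝ) ^ 2 := by
  have h1 : (0:ℝ) < n := by exact_mod_cast hn
  unfold mu
  rw [div_sub_div _ _ (by positivity) (by positivity : (n:ℝ) + 1 ≠ 0)]
  rw [div_le_div_iff₀ (by positivity) (by positivity)]
  ring_nf
  nlinarith

lemma log_le_rpow {r x : ℝ} (hr : 0 < r) (hx : 1 ≤ x) : Real.log x ≤ (1 / r) * x ^ r := by
  have hx0 : 0 < x := lt_of_lt_of_le one_pos hx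
  have h1 : Real.log (x ^ r) = r * Real.log x := Real.log_rpow hx0 r
  have h2 : Real.log (x ^ r) ≤ x ^ r - 1 := Real.log_le_sub_one_of_pos (Real.rpow_pos_of_pos hx0 r)
  have h3 : r * Real.log x ≤ x ^ r := by rw [← h1]; linarith
  rw [one_div]
  rw [inv_mul_eq_div, le_div_iff₀ hr]
  linarith [h3]

lemma logpow_le {k : ℕ} (hk : 0 < k) {x : ℝ} (hx : 1 ≤ x) :
    Real.log x ^ k ≤ (2 * (k:ℝ)) ^ k * x ^ ((1:ℝ) / 2) := by
  have hx0 : 0 < x := lt_of_lt_of_le one_pos hx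
  have hr : (0:ℝ) < 1 / (2 * k) := by positivity
  have h1 : Real.log x ≤ (2 * (k:ℝ)) * x ^ ((1:ℝ) / (2 * k)) := by
    have := log_le_rpow (x := x) hr hx
    rw [one_div_one_div] at this
    exact this
  have h2 : Real.log x ^ k ≤ ((2 * (k:ℝ)) * x ^ ((1:ℝ) / (2 * k))) ^ k := by
    exact pow_le_pow_left₀ (Real.log_nonneg hx) h1 k
  calc Real.log x ^ k ≤ ((2 * (k:ℝ)) * x ^ ((1:ℝ) / (2 * k))) ^ k := h2
    _ = (2 * (k:ℝ)) ^ k * (x ^ ((1:ℝ) / (2 * k))) ^ k := mul_pow _ _ _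
    _ = (2 * (k:ℝ)) ^ k * x ^ ((1:ℝ) / 2) := by
        congr 1
        rw [← Real.rpow_natCast (x ^ ((1:ℝ) / (2 * k))) k, ← Real.rpow_mul hx0.le]
        congr 1
        have hk' : (k:ℝ) ≠ 0 := by positivity
        field_simp

lemma neglog_pow_le {k : ℕ} (hk : 0 < k) {x : ℝ} (hx : x ∈ Set.Ioc (0:ℝ) 1) :
    (-Real.log x) ^ k ≤ (2 * (k:ℝ)) ^ k * x ^ (-(1/2) : ℝ) := by
  have hx0 : 0 < x := hx.1
  have hinv : 1 ≤ x⁻¹ := (one_le_inv₀ hx0).mpr hx.2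
  have h1 : (-Real.log x) ^ k = Real.log x⁻¹ ^ k := by rw [Real.log_inv]
  rw [h1]
  calc Real.log x⁻¹ ^ k ≤ (2 * (k:ℝ)) ^ k * (x⁻¹) ^ ((1:ℝ) / 2) := logpow_le hk hinv
    _ = (2 * (k:ℝ)) ^ k * x ^ (-(1/2) : ℝ) := by
        rw [Real.inv_rpow hx0.le, ← Real.rpow_neg hx0.le]

lemma integrableOn_neglog_pow {k : ℕ} (hk : 0 < k) :
    IntegrableOn (fun x => (-Real.log x) ^ k) (Set.Ioc (0:ℝ) 1) := by
  have hmeas : AEStronglyMeasurable (fun x => (-Real.log x) ^ k)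
      (volume.restrict (Set.Ioc (0:ℝ) 1)) :=
    ((Real.measurable_log.neg).pow_const k).aestronglyMeasurable
  have h1 : IntervalIntegrable (fun x : ℝ => x ^ (-(1/2) : ℝ)) volume 0 1 :=
    intervalIntegral.intervalIntegrable_rpow' (by norm_num)
  have h2 : IntegrableOn (fun x : ℝ => x ^ (-(1/2) : ℝ)) (Set.Ioc (0:ℝ) 1) :=
    (intervalIntegrable_iff_integrableOn_Ioc_of_le (by norm_num)).mp h1
  have hint : IntegrableOn (fun x : ℝ => (2 * (k:ℝ)) ^ k * x ^ (-(1/2) : ℝ)) (Set.Ioc (0:ℝ) 1) :=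
    h2.const_mul _
  refine hint.mono' hmeas ?_
  filter_upwards [ae_restrict_mem measurableSet_Ioc] with x hx
  rw [Real.norm_eq_abs,
    abs_of_nonneg (pow_nonneg (neg_nonneg.mpr (Real.log_nonpos hx.1.le hx.2)) k)]
  exact neglog_pow_le hk hx

lemma integral_tail_tendsto {k : ℕ} (hk : 0 < k) :
    Tendsto (fun M : ℕ => ∫ x in Set.Ioc (0:ℝ) (1 / ((M:ℝ) + 1)), (-Real.log x) ^ k)
      atTop (𝓝 0) := by
  have hint := integrableOn_neglog_pow hk
  have hmono : Monotone (fun M : ℕ => Set.Ioc (1 / ((M:ℝ) + 1)) 1) := by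
    intro i j hij
    apply Set.Ioc_subset_Ioc _ le_rfl
    apply one_div_le_one_div_of_le (by positivity)
    have : (i:ℝ) ≤ j := by exact_mod_cast hij
    linarith
  have hunion : (⋃ M : ℕ, Set.Ioc (1 / ((M:ℝ) + 1)) 1) = Set.Ioc (0:ℝ) 1 := by
    ext x
    simp only [Set.mem_iUnion, Set.mem_Ioc]
    constructor
    · rintro ⟨M, h1, h2⟩
      exact ⟨lt_trans (by positivity) h1, h2⟩
    · rintro ⟨h1, h2⟩
      obtain ⟨M, hM⟩ := exists_nat_gt (1 / x)
      refine ⟨M, ?_, h2⟩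
      rw [div_lt_iff₀ (by positivity)]
      rw [div_lt_iff₀ h1] at hM
      nlinarith
  have h2 := tendsto_setIntegral_of_monotone (fun M => measurableSet_Ioc) hmono
    (by rw [hunion]; exact hint)
  rw [hunion] at h2
  have hsplit : ∀ M : ℕ, ∫ x in Set.Ioc (0:ℝ) (1 / ((M:ℝ) + 1)), (-Real.log x) ^ k
      = (∫ x in Set.Ioc (0:ℝ) 1, (-Real.log x) ^ k)
        - ∫ x in Set.Ioc (1 / ((M:ℝ) + 1)) 1, (-Real.log x) ^ k := by
    intro M
    have hm1 : (0:ℝ) < 1 / ((M:ℝ) + 1) := by positivity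
    have hm2 : 1 / ((M:ℝ) + 1) ≤ 1 := by
      rw [div_le_one (by positivity)]
      simp [Nat.cast_nonneg]
    have hd : Disjoint (Set.Ioc (0:ℝ) (1 / ((M:ℝ) + 1))) (Set.Ioc (1 / ((M:ℝ) + 1)) 1) :=
      Set.Ioc_disjoint_Ioc_of_le le_rfl
    have hu : Set.Ioc (0:ℝ) (1 / ((M:ℝ) + 1)) ∪ Set.Ioc (1 / ((M:ℝ) + 1)) 1
        = Set.Ioc (0:ℝ) 1 := Set.Ioc_union_Ioc_eq_Ioc hm1.le hm2
    have := MeasureTheory.setIntegral_union hd measurableSet_Ioc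
      (hint.mono_set (by rw [← hu]; exact Set.subset_union_left))
      (hint.mono_set (by rw [← hu]; exact Set.subset_union_right))
    rw [hu] at this
    linarith
  have h3 : Tendsto (fun M : ℕ => (∫ x in Set.Ioc (0:ℝ) 1, (-Real.log x) ^ k)
      - ∫ x in Set.Ioc (1 / ((M:ℝ) + 1)) 1, (-Real.log x) ^ k) atTop
      (𝓝 ((∫ x in Set.Ioc (0:ℝ) 1, (-Real.log x) ^ k)
        - ∫ x in Set.Ioc (0:ℝ) 1, (-Real.log x) ^ k)) :=
    tendsto_const_nhds.sub h2
  rw [sub_self] at h3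
  refine h3.congr fun M => (hsplit M).symm

lemma exists_bound {k : ℕ} (hk : 0 < k) (a : ℕ → ℝ) (ha0 : a 0 = 0)
    (hconv : ∃ L : ℝ, Tendsto (fun N : ℕ => a N / (Real.log N) ^ k) atTop (nhds L)) :
    ∃ B C₁ : ℝ, 0 ≤ B ∧ 0 ≤ C₁ ∧ ∀ n : ℕ, |a n| ≤ B * (Real.log n) ^ k + C₁ := by
  obtain ⟨L, hL⟩ := hconv
  obtain ⟨B, hB⟩ := hL.abs.bddAbove_range
  simp only [mem_upperBounds, Set.mem_range, forall_exists_index] at hB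
  have hB' : ∀ n : ℕ, |a n / (Real.log n) ^ k| ≤ B := fun n => hB _ n rfl
  refine ⟨max B 0, |a 1|, le_max_right _ _, abs_nonneg _, fun n => ?_⟩
  match n with
  | 0 =>
    rw [ha0]
    simp only [abs_zero, Nat.cast_zero, Real.log_zero, zero_pow hk.ne', mul_zero, zero_add]
    exact abs_nonneg _
  | 1 =>
    simp only [Nat.cast_one, Real.log_one, zero_pow hk.ne', mul_zero, zero_add, le_refl]
  | (n + 2) =>
    have hn2 : (2:ℝ) ≤ ((n + 2 : ℕ) : ℝ) := by push_cast; linarith [Nat.cast_nonneg (α := ℝ) n]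
    have hlog : 0 < Real.log ((n + 2 : ℕ) : ℝ) := Real.log_pos (by linarith)
    have hpow : 0 < Real.log ((n + 2 : ℕ) : ℝ) ^ k := pow_pos hlog k
    have := hB' (n + 2)
    rw [abs_div, abs_of_pos hpow, div_le_iff₀ hpow] at this
    calc |a (n + 2)| ≤ B * Real.log ((n + 2 : ℕ) : ℝ) ^ k := this
      _ ≤ max B 0 * Real.log ((n + 2 : ℕ) : ℝ) ^ k + |a 1| := by
          have h1 : B * Real.log ((n + 2 : ℕ) : ℝ) ^ k
              ≤ max B 0 * Real.log ((n + 2 : ℕ) : ℝ) ^ k :=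
            mul_le_mul_of_nonneg_right (le_max_left _ _) hpow.le
          linarith [abs_nonneg (a 1)]

lemma summable_abs_mu {k : ℕ} (hk : 0 < k) (a : ℕ → ℝ) (ha0 : a 0 = 0)
    {B C₁ : ℝ} (hB : 0 ≤ B) (hC : 0 ≤ C₁)
    (hbd : ∀ n : ℕ, |a n| ≤ B * (Real.log n) ^ k + C₁) :
    Summable (fun n => |a n * mu n|) := by
  set W : ℕ → ℝ := fun n =>
    B * (2 * (k:ℝ)) ^ k * (1 / (n:ℝ) ^ ((3:ℝ)/2)) + C₁ * (1 / (n:ℝ) ^ ((2:ℝ))) with hW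
  have hWsum : Summable W := by
    apply Summable.add
    · exact (Real.summable_one_div_nat_rpow.mpr (by norm_num)).mul_left _
    · exact (Real.summable_one_div_nat_rpow.mpr (by norm_num)).mul_left _
  refine Summable.of_nonneg_of_le (fun n => abs_nonneg _) (fun n => ?_) hWsum
  match n with
  | 0 =>
    rw [ha0]
    simp only [zero_mul, abs_zero, hW, Nat.cast_zero]
    rw [Real.zero_rpow (by norm_num), Real.zero_rpow (by norm_num)]
    simp
  | (n + 1) =>
    set m : ℕ := n + 1
    have hm : 0 < m := Nat.succ_pos n
    have hmR : (0:ℝ) < (m:ℝ) := by exact_mod_cast hm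
    have hmu : 0 ≤ mu m := mu_nonneg m hm
    rw [abs_mul, abs_of_nonneg hmu]
    have h1 : |a m| * mu m ≤ (B * Real.log m ^ k + C₁) * mu m :=
      mul_le_mul_of_nonneg_right (hbd m) hmu
    have h2 : mu m ≤ 1 / (m:ℝ) ^ 2 := mu_le_sq m hm
    have hlog : Real.log (m:ℝ) ^ k * mu m ≤ (2 * (k:ℝ)) ^ k * (1 / (m:ℝ) ^ ((3:ℝ)/2)) := by
      rcases le_or_gt 1 (m:ℝ) with hm1 | hm1
      · have hl := logpow_le hk hm1
        have hnn : (0:ℝ) ≤ Real.log (m:ℝ) ^ k := pow_nonneg (Real.log_nonneg hm1) k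
        calc Real.log (m:ℝ) ^ k * mu m ≤ ((2 * (k:ℝ)) ^ k * (m:ℝ) ^ ((1:ℝ)/2)) * (1 / (m:ℝ) ^ 2) := by
              apply mul_le_mul hl h2 hmu
              positivity
          _ = (2 * (k:ℝ)) ^ k * (1 / (m:ℝ) ^ ((3:ℝ)/2)) := by
              rw [mul_assoc]
              congr 1
              rw [← Real.rpow_natCast (m:ℝ) 2, mul_one_div,
                div_eq_div_iff (by positivity) (by positivity), one_mul, ← Real.rpow_add hmR]
              norm_num
          _ ≤ (2 * (k:ℝ)) ^ k * (1 / (m:ℝ) ^ ((3:ℝ)/2)) := le_refl _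
      · exfalso
        have : (1:ℝ) ≤ (m:ℝ) := by exact_mod_cast hm
        linarith
    have hC2 : C₁ * mu m ≤ C₁ * (1 / (m:ℝ) ^ ((2:ℝ))) := by
      apply mul_le_mul_of_nonneg_left _ hC
      have hcast : (1:ℝ) / (m:ℝ) ^ ((2:ℝ)) = 1 / (m:ℝ) ^ (2:ℕ) := by
        rw [← Real.rpow_natCast (m:ℝ) 2]
        norm_num
      rw [hcast]
      exact h2
    calc |a m| * mu m ≤ (B * Real.log (m:ℝ) ^ k + C₁) * mu m := h1
      _ = B * (Real.log (m:ℝ) ^ k * mu m) + C₁ * mu m := by ring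
      _ ≤ B * ((2 * (k:ℝ)) ^ k * (1 / (m:ℝ) ^ ((3:ℝ)/2))) + C₁ * (1 / (m:ℝ) ^ ((2:ℝ))) := by
          have := mul_le_mul_of_nonneg_left hlog hB
          linarith
      _ = W m := by rw [hW]; ring

lemma floor_inv_eq {n : ℕ} {x : ℝ} (hx : x ∈ Set.Ioc (1 / ((n:ℝ) + 2)) (1 / ((n:ℝ) + 1))) :
    ⌊1 / x⌋₊ = n + 1 := by
  have hn2 : (0:ℝ) < (n:ℝ) + 2 := by positivity
  have hn1 : (0:ℝ) < (n:ℝ) + 1 := by positivity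
  have hx0 : 0 < x := lt_trans (by positivity) hx.1
  have h1 : ((n:ℝ) + 1) ≤ 1 / x := by
    rw [le_div_iff₀ hx0]
    have := hx.2
    rw [le_div_iff₀ hn1] at this
    linarith [this]
  have h2 : 1 / x < (n:ℝ) + 2 := by
    rw [div_lt_iff₀ hx0]
    have := hx.1
    rw [div_lt_iff₀ hn2] at this
    linarith [this]
  rw [Nat.floor_eq_iff (by positivity)]
  constructor
  · push_cast
    linarith
  · push_cast
    linarith

lemma aesm_f (a : ℕ → ℝ) :
    AEStronglyMeasurable (fun x : ℝ => a ⌊1 / x⌋₊) (volume.restrict (Set.Ioc (0:ℝ) 1)) := by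
  have : Measurable (fun x : ℝ => a ⌊1 / x⌋₊) := by
    have h1 : Measurable (fun x : ℝ => ⌊1 / x⌋₊) := by
      simp_rw [one_div]
      exact measurable_inv.nat_floor
    exact measurable_from_nat.comp h1
  exact this.aestronglyMeasurable

lemma abs_f_le {k : ℕ} (hk : 0 < k) (a : ℕ → ℝ) {B C₁ : ℝ} (hB : 0 ≤ B)
    (hbd : ∀ n : ℕ, |a n| ≤ B * (Real.log n) ^ k + C₁)
    {x : ℝ} (hx : x ∈ Set.Ioc (0:ℝ) 1) :
    |a ⌊1 / x⌋₊| ≤ B * (-Real.log x) ^ k + C₁ := by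
  have hx0 : 0 < x := hx.1
  have hinv : 1 ≤ 1 / x := by
    rw [le_div_iff₀ hx0]
    simpa using hx.2
  have hfl : 1 ≤ ⌊1 / x⌋₊ := Nat.le_floor (by exact_mod_cast hinv)
  have hle : (⌊1 / x⌋₊ : ℝ) ≤ 1 / x := Nat.floor_le (by positivity)
  have hlog : Real.log (⌊1 / x⌋₊ : ℝ) ≤ -Real.log x := by
    have := Real.log_le_log (by exact_mod_cast hfl : (0:ℝ) < (⌊1 / x⌋₊ : ℝ)) hle
    rwa [Real.log_div one_ne_zero hx0.ne', Real.log_one, zero_sub] at this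
  have hlognn : 0 ≤ Real.log (⌊1 / x⌋₊ : ℝ) := Real.log_nonneg (by exact_mod_cast hfl)
  calc |a ⌊1 / x⌋₊| ≤ B * Real.log (⌊1 / x⌋₊ : ℝ) ^ k + C₁ := hbd _
    _ ≤ B * (-Real.log x) ^ k + C₁ := by
        have := pow_le_pow_left₀ hlognn hlog k
        nlinarith [mul_le_mul_of_nonneg_left this hB]

lemma integrableOn_f {k : ℕ} (hk : 0 < k) (a : ℕ → ℝ) {B C₁ : ℝ} (hB : 0 ≤ B) (hC : 0 ≤ C₁)
    (hbd : ∀ n : ℕ, |a n| ≤ B * (Real.log n) ^ k + C₁) :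
    IntegrableOn (fun x : ℝ => a ⌊1 / x⌋₊) (Set.Ioc (0:ℝ) 1) := by
  have hdom : IntegrableOn (fun x : ℝ => B * (-Real.log x) ^ k + C₁) (Set.Ioc (0:ℝ) 1) := by
    apply Integrable.add
    · exact (integrableOn_neglog_pow hk).const_mul B
    · exact integrableOn_const (by rw [Real.volume_Ioc]; exact ENNReal.ofReal_ne_top)
  refine hdom.mono' (aesm_f a) ?_
  filter_upwards [ae_restrict_mem measurableSet_Ioc] with x hx
  rw [Real.norm_eq_abs]
  exact abs_f_le hk a hB hbd hx

lemma integral_eq_tsum {k : ℕ} (hk : 0 < k) (a : ℕ → ℝ) (ha0 : a 0 = 0)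
    {B C₁ : ℝ} (hB : 0 ≤ B) (hC : 0 ≤ C₁)
    (hbd : ∀ n : ℕ, |a n| ≤ B * (Real.log n) ^ k + C₁) :
    ∫ x in Set.Ioc (0:ℝ) 1, a ⌊1 / x⌋₊ = ∑' n : ℕ, a n * mu n := by
  have hsum : Summable (fun n => a n * mu n) :=
    (summable_abs_mu hk a ha0 hB hC hbd).of_abs
  set s : ℕ → Set ℝ := fun n => Set.Ioc (1 / ((n:ℝ) + 2)) (1 / ((n:ℝ) + 1)) with hs
  have hunion : (⋃ n, s n) = Set.Ioc (0:ℝ) 1 := by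
    ext x
    simp only [hs, Set.mem_iUnion, Set.mem_Ioc]
    constructor
    · rintro ⟨n, h1, h2⟩
      constructor
      · exact lt_trans (by positivity) h1
      · calc x ≤ 1 / ((n:ℝ) + 1) := h2
          _ ≤ 1 := by
            rw [div_le_one (by positivity)]
            linarith [Nat.cast_nonneg (α := ℝ) n]
    · rintro ⟨h1, h2⟩
      have hinv : 1 ≤ 1 / x := by
        rw [le_div_iff₀ h1]
        simpa using h2
      have hfl : 1 ≤ ⌊1 / x⌋₊ := Nat.le_floor (by exact_mod_cast hinv)
      refine ⟨⌊1 / x⌋₊ - 1, ?_, ?_⟩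
      · have hlt : 1 / x < (⌊1 / x⌋₊ : ℝ) + 1 := Nat.lt_floor_add_one _
        have hcast : ((⌊1 / x⌋₊ - 1 : ℕ) : ℝ) + 2 = (⌊1 / x⌋₊ : ℝ) + 1 := by
          rw [Nat.cast_sub hfl]
          push_cast
          ring
        rw [hcast, div_lt_iff₀ (by positivity)]
        rw [div_lt_iff₀ h1] at hlt
        linarith
      · have hle : (⌊1 / x⌋₊ : ℝ) ≤ 1 / x := Nat.floor_le (by positivity)
        have hcast : ((⌊1 / x⌋₊ - 1 : ℕ) : ℝ) + 1 = (⌊1 / x⌋₊ : ℝ) := by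
          rw [Nat.cast_sub hfl]
          push_cast
          ring
        rw [hcast, le_div_iff₀ (by exact_mod_cast hfl : (0:ℝ) < (⌊1 / x⌋₊ : ℝ))]
        rw [le_div_iff₀ h1] at hle
        linarith
  have hint := integrableOn_f hk a hB hC hbd
  have hmeas : ∀ n, MeasurableSet (s n) := fun n => measurableSet_Ioc
  have hdisj : Pairwise (Function.onFun Disjoint s) := by
    intro i j hij
    simp only [hs, Function.onFun]
    rw [Set.Ioc_disjoint_Ioc]
    rcases lt_or_gt_of_ne hij with h | h
    · refine le_trans (min_le_right _ _) (le_trans ?_ (le_max_left _ _))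
      apply one_div_le_one_div_of_le (by positivity)
      have : (i:ℝ) + 1 ≤ j := by exact_mod_cast h
      linarith
    · refine le_trans (min_le_left _ _) (le_trans ?_ (le_max_right _ _))
      apply one_div_le_one_div_of_le (by positivity)
      have : (j:ℝ) + 1 ≤ i := by exact_mod_cast h
      linarith
  have hIU : ∫ x in Set.Ioc (0:ℝ) 1, a ⌊1 / x⌋₊ = ∑' n, ∫ x in s n, a ⌊1 / x⌋₊ := by
    rw [← hunion] at hint ⊢
    exact integral_iUnion hmeas hdisj hint
  have hpiece : ∀ n : ℕ, ∫ x in s n, a ⌊1 / x⌋₊ = a (n + 1) * mu (n + 1) := by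
    intro n
    have h1 : ∫ x in s n, a ⌊1 / x⌋₊ = ∫ _x in s n, a (n + 1) :=
      setIntegral_congr_fun measurableSet_Ioc (fun x hx => by rw [floor_inv_eq hx])
    have hsub : (0:ℝ) ≤ 1 / ((n:ℝ) + 1) - 1 / ((n:ℝ) + 2) := by
      have := one_div_le_one_div_of_le (by positivity : (0:ℝ) < (n:ℝ) + 1)
        (by linarith : (n:ℝ) + 1 ≤ (n:ℝ) + 2)
      linarith
    rw [h1, setIntegral_const, smul_eq_mul,
      mul_comm (volume.real (s n)) (a (n + 1))]
    congr 1
    rw [hs]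
    simp only
    rw [measureReal_def, Real.volume_Ioc, ENNReal.toReal_ofReal hsub]
    unfold mu
    push_cast
    ring
  rw [hIU, tsum_congr hpiece, Summable.tsum_eq_zero_add hsum, ha0, zero_mul, zero_add]


lemma cast_div_est (N j : ℕ) (hj : 0 < j) :
    ((N / j : ℕ) : ℝ) ≤ (N : ℝ) / j ∧ (N : ℝ) / j < ((N / j : ℕ) : ℝ) + 1 := by
  have hjR : (0:ℝ) < (j:ℝ) := by exact_mod_cast hj
  constructor
  · exact Nat.cast_div_le
  · have h := Nat.lt_div_mul_add (a := N) hj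
    have : (N:ℝ) < ((N / j : ℕ) : ℝ) * j + j := by exact_mod_cast h
    rw [div_lt_iff₀ hjR]
    linarith

lemma Dn_est (k N n : ℕ) (hN : 0 < N) (hn : 0 < n) :
    |((cnt k (N / n) : ℝ) - cnt k (N / (n + 1))) / N - del k * mu n|
      ≤ (2 * Q k + 2) / N := by
  have hNR : (0:ℝ) < (N:ℝ) := by exact_mod_cast hN
  have key : ∀ j : ℕ, 0 < j → |(cnt k (N / j) : ℝ) - del k * ((N:ℝ) / j)| ≤ Q k + 1 := by
    intro j hj
    obtain ⟨hc1, hc2⟩ := cast_div_est N j hj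
    have h1 := cnt_near k (N / j)
    have h2 : |del k * ((N / j : ℕ) : ℝ) - del k * ((N:ℝ) / j)| ≤ 1 := by
      rw [← mul_sub, abs_mul, abs_of_nonneg (del_nonneg k)]
      have habs : |((N / j : ℕ) : ℝ) - (N:ℝ) / j| ≤ 1 := by
        rw [abs_le]
        constructor <;> linarith
      calc del k * |((N / j : ℕ) : ℝ) - (N:ℝ) / j| ≤ 1 * 1 :=
            mul_le_mul (del_le_one k) habs (abs_nonneg _) zero_le_one
        _ = 1 := mul_one 1
    calc |(cnt k (N / j) : ℝ) - del k * ((N:ℝ) / j)|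
        ≤ |(cnt k (N / j) : ℝ) - del k * ((N / j : ℕ) : ℝ)|
          + |del k * ((N / j : ℕ) : ℝ) - del k * ((N:ℝ) / j)| := abs_sub_le _ _ _
      _ ≤ Q k + 1 := add_le_add h1 h2
  have h1 := key n hn
  have h2 := key (n + 1) (Nat.succ_pos n)
  push_cast at h2
  have heq : ((cnt k (N / n) : ℝ) - cnt k (N / (n + 1))) / N - del k * mu n
      = (((cnt k (N / n) : ℝ) - del k * ((N:ℝ) / n))
        - ((cnt k (N / (n + 1)) : ℝ) - del k * ((N:ℝ) / (n + 1)))) / N := by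
    have hnR : (0:ℝ) < (n:ℝ) := by exact_mod_cast hn
    unfold mu
    push_cast
    field_simp
    ring
  rw [heq, abs_div, abs_of_pos hNR]
  gcongr
  calc |((cnt k (N / n) : ℝ) - del k * ((N:ℝ) / n))
        - ((cnt k (N / (n + 1)) : ℝ) - del k * ((N:ℝ) / (n + 1)))|
        ≤ |(cnt k (N / n) : ℝ) - del k * ((N:ℝ) / n)|
          + |(cnt k (N / (n + 1)) : ℝ) - del k * ((N:ℝ) / (n + 1))| := abs_sub _ _
      _ ≤ (Q k + 1) + (Q k + 1) := add_le_add h1 h2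
      _ = 2 * Q k + 2 := by ring

lemma tail_bound {k : ℕ} (hk : 0 < k) {B C₁ : ℝ} (hB : 0 ≤ B) (hC : 0 ≤ C₁)
    (N M : ℕ) (hN : 0 < N) :
    (1 / (N:ℝ)) * ∑ m ∈ Finset.Ioc 0 (N / (M + 1)),
        (B * (Real.log ((N / m : ℕ) : ℝ)) ^ k + C₁)
      ≤ B * (Real.log N) ^ k / N
        + B * (∫ x in Set.Ioc (0:ℝ) (1 / ((M:ℝ) + 1)), (-Real.log x) ^ k)
        + C₁ / ((M:ℝ) + 1) := by
  have hNR : (0:ℝ) < (N:ℝ) := by exact_mod_cast hN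
  set T : ℕ := N / (M + 1) with hT
  have hTN : T ≤ N := Nat.div_le_self N (M + 1)
  have hInt : IntegrableOn (fun x => (-Real.log x) ^ k) (Set.Ioc (0:ℝ) (1 / ((M:ℝ) + 1))) := by
    apply (integrableOn_neglog_pow hk).mono_set
    apply Set.Ioc_subset_Ioc le_rfl
    rw [div_le_one (by positivity)]
    linarith [Nat.cast_nonneg (α := ℝ) M]
  set J : ℝ := ∫ x in Set.Ioc (0:ℝ) (1 / ((M:ℝ) + 1)), (-Real.log x) ^ k with hJ
  have hIntNonneg : 0 ≤ ∫ x in Set.Ioc (0:ℝ) (1 / ((M:ℝ) + 1)), (-Real.log x) ^ k := by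
    apply setIntegral_nonneg measurableSet_Ioc
    intro x hx
    apply pow_nonneg
    rw [neg_nonneg]
    apply Real.log_nonpos hx.1.le
    calc x ≤ 1 / ((M:ℝ) + 1) := hx.2
      _ ≤ 1 := by
        rw [div_le_one (by positivity)]
        linarith [Nat.cast_nonneg (α := ℝ) M]
  have hTdivN : (T : ℝ) / N ≤ 1 / ((M:ℝ) + 1) := by
    have h1 : (T : ℝ) ≤ (N : ℝ) / ((M:ℝ) + 1) := by
      
      have := Nat.cast_div_le (α := ℝ) (m := N) (n := M + 1)
      push_cast at this
      exact this
    rw [div_le_div_iff₀ hNR (by positivity)]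
    calc (T:ℝ) * ((M:ℝ) + 1) ≤ ((N:ℝ) / ((M:ℝ) + 1)) * ((M:ℝ) + 1) :=
          mul_le_mul_of_nonneg_right h1 (by positivity)
      _ = N := by field_simp
      _ = 1 * N := (one_mul _).symm
  -- step 1: replace nat-division logs with real-division logs
  have hstep1 : ∑ m ∈ Finset.Ioc 0 T, (B * (Real.log ((N / m : ℕ) : ℝ)) ^ k + C₁)
      ≤ ∑ m ∈ Finset.Ioc 0 T, (B * (Real.log ((N:ℝ) / (m:ℝ))) ^ k + C₁) := by
    apply Finset.sum_le_sum
    intro m hm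
    obtain ⟨hm0, hmT⟩ := Finset.mem_Ioc.mp hm
    have hmN : m ≤ N := le_trans hmT hTN
    have hfl1 : 1 ≤ N / m := (Nat.le_div_iff_mul_le hm0).mpr (by omega)
    have hle : ((N / m : ℕ) : ℝ) ≤ (N:ℝ) / m := (cast_div_est N m hm0).1
    have hlog : Real.log ((N / m : ℕ) : ℝ) ≤ Real.log ((N:ℝ) / m) :=
      Real.log_le_log (by exact_mod_cast hfl1) hle
    have hnn : 0 ≤ Real.log ((N / m : ℕ) : ℝ) := Real.log_natCast_nonneg _
    have := pow_le_pow_left₀ hnn hlog k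
    nlinarith [mul_le_mul_of_nonneg_left this hB]
  -- step 2: bound the real-log sum by the main term plus an integral
  have hstep2 : ∑ m ∈ Finset.Ioc 0 T, (Real.log ((N:ℝ) / (m:ℝ))) ^ k
      ≤ (Real.log N) ^ k
        + (N:ℝ) * ∫ x in Set.Ioc (0:ℝ) (1 / ((M:ℝ) + 1)), (-Real.log x) ^ k := by
    rcases Nat.eq_zero_or_pos T with hT0 | hT1
    · rw [hT0]
      simp only [Finset.Ioc_self, Finset.sum_empty]
      have : 0 ≤ (Real.log N) ^ k := pow_nonneg (Real.log_natCast_nonneg N) k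
      nlinarith
    · set g : ℝ → ℝ := fun x => Real.log ((N:ℝ) / x) ^ k with hg
      have hNe : (N:ℝ) ≠ 0 := ne_of_gt hNR
      have hTR : (1:ℝ) ≤ (T:ℝ) := by exact_mod_cast hT1
      have hTNR : (T:ℝ) ≤ (N:ℝ) := by exact_mod_cast hTN
      have hTreal : (1:ℝ) + ((T - 1 : ℕ) : ℝ) = (T:ℝ) := by
        rw [Nat.cast_sub hT1]
        push_cast
        ring
      have hAnt : AntitoneOn g (Set.Icc (1:ℝ) (1 + ((T - 1 : ℕ) : ℝ))) := by
        rw [hTreal]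
        intro x hx y hy hxy
        have hx1 : (1:ℝ) ≤ x := hx.1
        have hy1 : (1:ℝ) ≤ y := hy.1
        have hyN : y ≤ (N:ℝ) := le_trans hy.2 hTNR
        have hdiv : (N:ℝ) / y ≤ (N:ℝ) / x := by
          rw [div_le_div_iff₀ (by linarith) (by linarith)]
          nlinarith
        have h1y : (1:ℝ) ≤ (N:ℝ) / y := by
          rw [le_div_iff₀ (by linarith)]
          linarith
        exact pow_le_pow_left₀ (Real.log_nonneg h1y)
          (Real.log_le_log (by linarith) hdiv) k
      have hkey := hAnt.sum_le_integral
      have hsum_eq : ∑ m ∈ Finset.Ioc 1 T, g (m:ℝ)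
          = ∑ i ∈ Finset.range (T - 1), g ((1:ℝ) + ((i + 1 : ℕ) : ℝ)) := by
        rw [← Finset.Icc_add_one_left_eq_Ioc, ← Finset.Ico_add_one_right_eq_Icc, Finset.sum_Ico_eq_sum_range]
        have hidx : T + 1 - (1 + 1) = T - 1 := by omega
        rw [hidx]
        refine Finset.sum_congr rfl fun i _ => congrArg g ?_
        push_cast
        ring
      have hIoc01 : ∑ m ∈ Finset.Ioc 0 T, g (m:ℝ)
          = g 1 + ∑ m ∈ Finset.Ioc 1 T, g (m:ℝ) := by
        rw [← Finset.sum_Ioc_consecutive (fun m : ℕ => g (m:ℝ)) (Nat.zero_le 1) hT1]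
        congr 1
        rw [show Finset.Ioc 0 1 = {1} from Nat.Ioc_succ_singleton 0, Finset.sum_singleton]
        norm_num
      have hint_eq : ∫ x in (1:ℝ)..(T:ℝ), g x
          = (N:ℝ) * ∫ x in ((1:ℝ)/N)..((T:ℝ)/N), (-Real.log x) ^ k := by
        have hgh : g = fun x => (fun u => (-Real.log u) ^ k) (x / (N:ℝ)) := by
          funext x
          simp only [hg]
          congr 2
          rw [← Real.log_inv, inv_div]
        rw [hgh, intervalIntegral.integral_comp_div (fun u => (-Real.log u) ^ k) hNe]
        rw [smul_eq_mul]
      have hset_le : ∫ x in Set.Ioc ((1:ℝ)/N) ((T:ℝ)/N), (-Real.log x) ^ k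
          ≤ ∫ x in Set.Ioc (0:ℝ) (1 / ((M:ℝ) + 1)), (-Real.log x) ^ k := by
        apply setIntegral_mono_set hInt
        · rw [EventuallyLE, ae_restrict_iff' measurableSet_Ioc]
          apply ae_of_all
          intro x hx
          apply pow_nonneg
          rw [neg_nonneg]
          apply Real.log_nonpos hx.1.le
          calc x ≤ 1 / ((M:ℝ) + 1) := hx.2
            _ ≤ 1 := by
              rw [div_le_one (by positivity)]
              linarith [Nat.cast_nonneg (α := ℝ) M]
        · apply HasSubset.Subset.eventuallyLE
          apply Set.Ioc_subset_Ioc (by positivity) hTdivN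
      have hintle : ∫ x in (1:ℝ)..(T:ℝ), g x ≤ (N:ℝ) *
          ∫ x in Set.Ioc (0:ℝ) (1 / ((M:ℝ) + 1)), (-Real.log x) ^ k := by
        rw [hint_eq, intervalIntegral.integral_of_le
          ((div_le_div_iff_of_pos_right hNR).mpr hTR : (1:ℝ)/N ≤ (T:ℝ)/N)]
        exact mul_le_mul_of_nonneg_left hset_le hNR.le
      have hg1 : g 1 = (Real.log N) ^ k := by
        simp only [hg, div_one]
      calc ∑ m ∈ Finset.Ioc 0 T, Real.log ((N:ℝ) / (m:ℝ)) ^ k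
          = ∑ m ∈ Finset.Ioc 0 T, g (m:ℝ) := rfl
        _ = g 1 + ∑ m ∈ Finset.Ioc 1 T, g (m:ℝ) := hIoc01
        _ = g 1 + ∑ i ∈ Finset.range (T - 1), g ((1:ℝ) + ((i + 1 : ℕ) : ℝ)) := by
            rw [hsum_eq]
        _ ≤ g 1 + ∫ x in (1:ℝ)..((1:ℝ) + ((T - 1 : ℕ) : ℝ)), g x := by
            exact (add_le_add_iff_left _).mpr hkey
        _ = g 1 + ∫ x in (1:ℝ)..(T:ℝ), g x := by rw [hTreal]
        _ ≤ (Real.log N) ^ k + (N:ℝ) *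
            ∫ x in Set.Ioc (0:ℝ) (1 / ((M:ℝ) + 1)), (-Real.log x) ^ k := by
            rw [hg1]
            exact (add_le_add_iff_left _).mpr hintle
  calc (1 / (N:ℝ)) * ∑ m ∈ Finset.Ioc 0 T, (B * (Real.log ((N / m : ℕ) : ℝ)) ^ k + C₁)
      ≤ (1 / (N:ℝ)) * ∑ m ∈ Finset.Ioc 0 T, (B * (Real.log ((N:ℝ) / (m:ℝ))) ^ k + C₁) := by
        apply mul_le_mul_of_nonneg_left hstep1 (by positivity)
    _ = (B / N) * ∑ m ∈ Finset.Ioc 0 T, (Real.log ((N:ℝ) / (m:ℝ))) ^ k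
        + C₁ * ((T:ℝ) / N) := by
        rw [Finset.sum_add_distrib, ← Finset.mul_sum, Finset.sum_const, Nat.card_Ioc,
          Nat.sub_zero, nsmul_eq_mul]
        ring
    _ ≤ (B / N) * ((Real.log N) ^ k
          + (N:ℝ) * ∫ x in Set.Ioc (0:ℝ) (1 / ((M:ℝ) + 1)), (-Real.log x) ^ k)
        + C₁ * (1 / ((M:ℝ) + 1)) := by
        apply add_le_add
        · exact mul_le_mul_of_nonneg_left hstep2 (by positivity)
        · exact mul_le_mul_of_nonneg_left hTdivN hC
    _ = B * (Real.log N) ^ k / N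
        + B * (∫ x in Set.Ioc (0:ℝ) (1 / ((M:ℝ) + 1)), (-Real.log x) ^ k)
        + C₁ / ((M:ℝ) + 1) := by
        have hNe : (N:ℝ) ≠ 0 := ne_of_gt hNR
        generalize (∫ x in Set.Ioc (0:ℝ) (1 / ((M:ℝ) + 1)), (-Real.log x) ^ k) = Jv
        field_simp

end Folner4


open Folner4 in
theorem folner_average_tendsto (k : ℕ) (hk : 0 < k)
    (a : ℕ → ℝ) (ha0 : a 0 = 0)
    (hconv : ∃ L : ℝ, Tendsto (fun N : ℕ => a N / (Real.log N) ^ k) atTop (nhds L)) :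
    Tendsto
      (fun N : ℕ =>
        (1 / (N : ℝ)) * ∑ m ∈ Finset.Icc 1 N,
          if Nat.Coprime m (∏ j : Fin k, Nat.nth Nat.Prime j.val) then a (N / m) else 0)
      atTop
      (nhds
        ((∏ j : Fin k, ((Nat.nth Nat.Prime j.val : ℝ) - 1))
            / (∏ j : Fin k, (Nat.nth Nat.Prime j.val : ℝ))
          * ∫ x in Set.Ioc (0 : ℝ) 1, a ⌊1 / x⌋₊)) := by
  classical
  obtain ⟨B, C₁, hB, hC, hbd⟩ := exists_bound hk a ha0 hconv
  have hsum : Summable (fun n => a n * mu n) :=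
    (summable_abs_mu hk a ha0 hB hC hbd).of_abs
  -- rewrite the constant
  have hden : (∏ j : Fin k, (Nat.nth Nat.Prime j.val : ℝ)) = ((Q k : ℕ) : ℝ) := by
    rw [Q, Nat.cast_prod]
    rw [Fin.prod_univ_eq_prod_range (fun j => ((Nat.nth Nat.Prime j : ℝ))) k]
    exact Finset.prod_congr rfl fun j _ => by simp [P]
  have hnum : (∏ j : Fin k, ((Nat.nth Nat.Prime j.val : ℝ) - 1)) = (((Q k).totient : ℕ) : ℝ) := by
    rw [totient_Q, Nat.cast_prod]
    rw [Fin.prod_univ_eq_prod_range (fun j => ((Nat.nth Nat.Prime j : ℝ) - 1)) k]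
    refine Finset.prod_congr rfl fun j _ => ?_
    rw [Nat.cast_sub (P_prime j).pos]
    simp [P]
  have hQprod : (∏ j : Fin k, Nat.nth Nat.Prime j.val) = Q k := by
    rw [Q]
    exact Fin.prod_univ_eq_prod_range _ k
  have hIeq : ∫ x in Set.Ioc (0:ℝ) 1, a ⌊1 / x⌋₊ = ∑' n, a n * mu n :=
    integral_eq_tsum hk a ha0 hB hC hbd
  have htarget : (∏ j : Fin k, ((Nat.nth Nat.Prime j.val : ℝ) - 1))
      / (∏ j : Fin k, (Nat.nth Nat.Prime j.val : ℝ))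
      * ∫ x in Set.Ioc (0:ℝ) 1, a ⌊1 / x⌋₊
      = del k * ∑' n, a n * mu n := by
    rw [hnum, hden, hIeq, del]
  rw [htarget]
  -- rewrite the averages
  have hsum_rw : ∀ N : ℕ, ∑ m ∈ Finset.Icc 1 N,
      (if Nat.Coprime m (∏ j : Fin k, Nat.nth Nat.Prime j.val) then a (N / m) else 0)
      = ∑ n ∈ Finset.Ioc 0 N, a n * ((cnt k (N / n) : ℝ) - cnt k (N / (n + 1))) := by
    intro N
    have h1 : Finset.Icc 1 N = Finset.Ioc 0 N := Finset.Icc_add_one_left_eq_Ioc 0 N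
    rw [h1, hQprod]
    have h2 : ∀ m ∈ Finset.Ioc 0 N, (if Nat.Coprime m (Q k) then a (N / m) else 0)
        = (if Nat.Coprime (Q k) m then a (N / m) else 0) := fun m _ =>
      if_congr Nat.coprime_comm rfl rfl
    rw [Finset.sum_congr rfl h2, ← Finset.sum_filter]
    have h3 := regroup k a N 0
    simpa using h3
  rw [show (fun N : ℕ => (1 / (N : ℝ)) * ∑ m ∈ Finset.Icc 1 N,
      if Nat.Coprime m (∏ j : Fin k, Nat.nth Nat.Prime j.val) then a (N / m) else 0)
      = (fun N : ℕ => (1 / (N : ℝ)) * ∑ n ∈ Finset.Ioc 0 N,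
          a n * ((cnt k (N / n) : ℝ) - cnt k (N / (n + 1))))
    from funext fun N => by rw [hsum_rw N]]
  -- the ε-argument
  rw [Metric.tendsto_atTop]
  intro ε hε
  have hε8 : (0:ℝ) < ε / 8 := by linarith
  -- choose M
  have hM_ev1 : ∀ᶠ M : ℕ in atTop,
      |∑ n ∈ Finset.range (M + 1), a n * mu n - ∑' n, a n * mu n| < ε / 8 := by
    have h := hsum.hasSum.tendsto_sum_nat.comp (tendsto_add_atTop_nat 1)
    filter_upwards [h.eventually (Metric.ball_mem_nhds _ hε8)] with M hM
    simpa [Function.comp, Real.dist_eq] using hM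
  have hM_ev2 : ∀ᶠ M : ℕ in atTop,
      B * (∫ x in Set.Ioc (0:ℝ) (1 / ((M:ℝ) + 1)), (-Real.log x) ^ k) < ε / 8 := by
    have h := (integral_tail_tendsto hk).const_mul B
    rw [mul_zero] at h
    filter_upwards [h.eventually (Metric.ball_mem_nhds _ hε8)] with M hM
    rw [Real.dist_eq, sub_zero] at hM
    exact lt_of_le_of_lt (le_abs_self _) hM
  have hM_ev3 : ∀ᶠ M : ℕ in atTop, C₁ / ((M:ℝ) + 1) < ε / 8 := by
    have h0 := tendsto_const_div_atTop_nhds_zero_nat C₁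
    have h1 : Tendsto (fun M : ℕ => C₁ / ((M:ℝ) + 1)) atTop (𝓝 0) := by
      refine (h0.comp (tendsto_add_atTop_nat 1)).congr fun M => ?_
      simp only [Function.comp]
      push_cast
      ring
    filter_upwards [h1.eventually (Metric.ball_mem_nhds _ hε8)] with M hM
    rw [Real.dist_eq, sub_zero] at hM
    exact lt_of_le_of_lt (le_abs_self _) hM
  obtain ⟨M, hM1, hM2, hM3⟩ := (hM_ev1.and (hM_ev2.and hM_ev3)).exists
  -- choose N₀
  have hN_ev1 : ∀ᶠ N : ℕ in atTop,
      (∑ n ∈ Finset.Ioc 0 M, |a n|) * ((2 * (Q k : ℝ) + 2) / N) < ε / 8 := by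
    have h := tendsto_const_div_atTop_nhds_zero_nat
      ((∑ n ∈ Finset.Ioc 0 M, |a n|) * (2 * (Q k : ℝ) + 2))
    have h' : Tendsto (fun N : ℕ =>
        (∑ n ∈ Finset.Ioc 0 M, |a n|) * ((2 * (Q k : ℝ) + 2) / N)) atTop (𝓝 0) :=
      h.congr fun N => by ring
    filter_upwards [h'.eventually (Metric.ball_mem_nhds _ hε8)] with N hN
    rw [Real.dist_eq, sub_zero] at hN
    exact lt_of_le_of_lt (le_abs_self _) hN
  have hN_ev2 : ∀ᶠ N : ℕ in atTop, B * (Real.log N) ^ k / N < ε / 8 := by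
    have h0 := Real.tendsto_pow_log_div_mul_add_atTop 1 0 k one_ne_zero
    have h1 := h0.comp (tendsto_natCast_atTop_atTop (R := ℝ))
    have h2 : Tendsto (fun N : ℕ => B * ((Real.log N) ^ k / N)) atTop (𝓝 (B * 0)) := by
      apply Tendsto.const_mul
      refine h1.congr fun N => ?_
      simp [Function.comp]
    rw [mul_zero] at h2
    filter_upwards [h2.eventually (Metric.ball_mem_nhds _ hε8)] with N hN
    rw [Real.dist_eq, sub_zero] at hN
    calc B * (Real.log N) ^ k / N = B * ((Real.log N) ^ k / N) := by ring
      _ ≤ |B * ((Real.log N) ^ k / N)| := le_abs_self _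
      _ < ε / 8 := hN
  have hN_ev3 : ∀ᶠ N : ℕ in atTop, M ≤ N ∧ 1 ≤ N :=
    (eventually_ge_atTop M).and (eventually_ge_atTop 1)
  obtain ⟨N₀, hN₀⟩ := eventually_atTop.mp (hN_ev1.and (hN_ev2.and hN_ev3))
  refine ⟨N₀, fun N hN => ?_⟩
  obtain ⟨hNa, hNb, hNM, hN1⟩ := hN₀ N hN
  have hNpos : 0 < N := hN1
  have hNR : (0:ℝ) < (N:ℝ) := by exact_mod_cast hNpos
  rw [Real.dist_eq]
  set Dn : ℕ → ℝ := fun n => ((cnt k (N / n) : ℝ) - cnt k (N / (n + 1))) with hDn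
  set P : ℝ := ∑ n ∈ Finset.Ioc 0 M, a n * mu n with hP
  set I : ℝ := ∑' n, a n * mu n with hI
  have hPeq : ∑ n ∈ Finset.range (M + 1), a n * mu n = P := by
    rw [hP, Finset.range_eq_Ico,
      Finset.sum_eq_sum_Ico_succ_bot (Nat.succ_pos M), Nat.succ_eq_add_one, Finset.Ico_add_one_right_eq_Icc,
      Finset.Icc_add_one_left_eq_Ioc, ha0, zero_mul, zero_add]
  have hsplitN : ∑ n ∈ Finset.Ioc 0 N, a n * Dn n
      = (∑ n ∈ Finset.Ioc 0 M, a n * Dn n) + ∑ n ∈ Finset.Ioc M N, a n * Dn n :=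
    (Finset.sum_Ioc_consecutive _ (Nat.zero_le M) hNM).symm
  -- term 1
  have hterm1 : |(1 / (N:ℝ)) * (∑ n ∈ Finset.Ioc 0 M, a n * Dn n) - del k * P|
      ≤ (∑ n ∈ Finset.Ioc 0 M, |a n|) * ((2 * (Q k : ℝ) + 2) / N) := by
    have heq : (1 / (N:ℝ)) * (∑ n ∈ Finset.Ioc 0 M, a n * Dn n) - del k * P
        = ∑ n ∈ Finset.Ioc 0 M, a n * (Dn n / N - del k * mu n) := by
      rw [hP, Finset.mul_sum, Finset.mul_sum, ← Finset.sum_sub_distrib]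
      exact Finset.sum_congr rfl fun n _ => by ring
    rw [heq, Finset.sum_mul]
    refine le_trans (Finset.abs_sum_le_sum_abs _ _) (Finset.sum_le_sum fun n hn => ?_)
    obtain ⟨hn0, _⟩ := Finset.mem_Ioc.mp hn
    rw [abs_mul]
    exact mul_le_mul_of_nonneg_left (Dn_est k N n hNpos hn0) (abs_nonneg _)
  -- term 2
  have hDn_nonneg : ∀ n, 0 < n → 0 ≤ Dn n := fun n hn => by
    rw [hDn, sub_nonneg]
    exact_mod_cast cnt_mono k (Nat.div_le_div_left (Nat.le_succ n) hn)
  have hterm2 : |(1 / (N:ℝ)) * ∑ n ∈ Finset.Ioc M N, a n * Dn n|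
      ≤ B * (Real.log N) ^ k / N
        + B * (∫ x in Set.Ioc (0:ℝ) (1 / ((M:ℝ) + 1)), (-Real.log x) ^ k)
        + C₁ / ((M:ℝ) + 1) := by
    have h1 : |(1 / (N:ℝ)) * ∑ n ∈ Finset.Ioc M N, a n * Dn n|
        ≤ (1 / (N:ℝ)) * ∑ n ∈ Finset.Ioc M N, |a n| * Dn n := by
      rw [abs_mul, abs_of_nonneg (by positivity : (0:ℝ) ≤ 1 / (N:ℝ))]
      apply mul_le_mul_of_nonneg_left _ (by positivity : (0:ℝ) ≤ 1 / (N:ℝ))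
      refine le_trans (Finset.abs_sum_le_sum_abs _ _) (Finset.sum_le_sum fun n hn => ?_)
      have hn0 : 0 < n := lt_of_le_of_lt (Nat.zero_le M) (Finset.mem_Ioc.mp hn).1
      rw [abs_mul, abs_of_nonneg (hDn_nonneg n hn0)]
    have h2 : ∑ n ∈ Finset.Ioc M N, |a n| * Dn n
        = ∑ m ∈ (Finset.Ioc 0 (N / (M + 1))).filter (fun m => Nat.Coprime (Q k) m),
            |a (N / m)| := (regroup k (fun n => |a n|) N M).symm
    have h3 : ∑ m ∈ (Finset.Ioc 0 (N / (M + 1))).filter (fun m => Nat.Coprime (Q k) m),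
          |a (N / m)|
        ≤ ∑ m ∈ Finset.Ioc 0 (N / (M + 1)),
            (B * (Real.log ((N / m : ℕ) : ℝ)) ^ k + C₁) := by
      calc ∑ m ∈ (Finset.Ioc 0 (N / (M + 1))).filter (fun m => Nat.Coprime (Q k) m), |a (N / m)|
          ≤ ∑ m ∈ (Finset.Ioc 0 (N / (M + 1))).filter (fun m => Nat.Coprime (Q k) m),
              (B * (Real.log ((N / m : ℕ) : ℝ)) ^ k + C₁) :=
            Finset.sum_le_sum fun m _ => hbd _
        _ ≤ ∑ m ∈ Finset.Ioc 0 (N / (M + 1)), (B * (Real.log ((N / m : ℕ) : ℝ)) ^ k + C₁) := by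
            apply Finset.sum_le_sum_of_subset_of_nonneg (Finset.filter_subset _ _)
            intro i _ _
            have := Real.log_natCast_nonneg (N / i)
            positivity
    calc |(1 / (N:ℝ)) * ∑ n ∈ Finset.Ioc M N, a n * Dn n|
        ≤ (1 / (N:ℝ)) * ∑ n ∈ Finset.Ioc M N, |a n| * Dn n := h1
      _ ≤ (1 / (N:ℝ)) * ∑ m ∈ Finset.Ioc 0 (N / (M + 1)),
            (B * (Real.log ((N / m : ℕ) : ℝ)) ^ k + C₁) := by
          apply mul_le_mul_of_nonneg_left _ (by positivity : (0:ℝ) ≤ 1 / (N:ℝ))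
          rw [h2]
          exact h3
      _ ≤ _ := tail_bound hk hB hC N M hNpos
  -- term 3
  have hterm3 : |del k * (P - I)| ≤ |∑ n ∈ Finset.range (M + 1), a n * mu n - I| := by
    rw [abs_mul, abs_of_nonneg (del_nonneg k), ← hPeq]
    nlinarith [del_le_one k, del_nonneg k,
      abs_nonneg (∑ n ∈ Finset.range (M + 1), a n * mu n - I)]
  -- assemble
  have hdecomp : (1 / (N:ℝ)) * (∑ n ∈ Finset.Ioc 0 N, a n * Dn n) - del k * I
      = ((1 / (N:ℝ)) * (∑ n ∈ Finset.Ioc 0 M, a n * Dn n) - del k * P)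
        + (1 / (N:ℝ)) * (∑ n ∈ Finset.Ioc M N, a n * Dn n)
        + del k * (P - I) := by
    rw [hsplitN]
    ring
  rw [hdecomp]
  calc |((1 / (N:ℝ)) * (∑ n ∈ Finset.Ioc 0 M, a n * Dn n) - del k * P)
        + (1 / (N:ℝ)) * (∑ n ∈ Finset.Ioc M N, a n * Dn n)
        + del k * (P - I)|
      ≤ |(1 / (N:ℝ)) * (∑ n ∈ Finset.Ioc 0 M, a n * Dn n) - del k * P|
        + |(1 / (N:ℝ)) * (∑ n ∈ Finset.Ioc M N, a n * Dn n)|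
        + |del k * (P - I)| := abs_add_three _ _ _
    _ < ε := by
        have e1 := lt_of_le_of_lt hterm1 hNa
        have e2 : |(1 / (N:ℝ)) * (∑ n ∈ Finset.Ioc M N, a n * Dn n)|
            < ε / 8 + ε / 8 + ε / 8 := by
          refine lt_of_le_of_lt hterm2 ?_
          have := add_lt_add (add_lt_add hNb hM2) hM3
          linarith
        have e3 := lt_of_le_of_lt hterm3 hM1
        linarith
end

section
/- Σ_{n=1}^∞ ⌊log₂ n⌋ / (n(n+1)) = 1, where ⌊log₂ n⌋ is the number of powers 2^0, 2^1, … that are ≤ n minus 1 (i.e., the integer part of log₂ n). Equivalently, Σ_{n=1}^∞ (⌊log₂ n⌋ + 1)/(n(n+1)) = 2. -/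
open Filter Topology ENNReal

lemma telescope (m : ℕ) :
    HasSum (fun k : ℕ => (1:ℝ) / ((k + m + 1) * (k + m + 2))) (1 / (m + 1)) := by
  have h : ∀ k : ℕ, (1:ℝ) / ((k + m + 1) * (k + m + 2))
      = 1 / (k + m + 1) - 1 / ((k+1:ℕ) + m + 1) := by
    intro k
    have h1 : (k:ℝ) + m + 1 ≠ 0 := by positivity
    have h2 : (k:ℝ) + m + 2 ≠ 0 := by positivity
    push_cast
    rw [show (k:ℝ) + 1 + m + 1 = k + m + 2 by ring]
    field_simp
    ring
  have hnn : ∀ k : ℕ, (0:ℝ) ≤ 1 / ((k + m + 1) * (k + m + 2)) := by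
    intro k; positivity
  rw [hasSum_iff_tendsto_nat_of_nonneg hnn]
  have key : ∀ N : ℕ, ∑ k ∈ Finset.range N, (1:ℝ) / ((k + m + 1) * (k + m + 2))
      = 1 / (m + 1) - 1 / (N + m + 1) := by
    intro N
    simp only [h]
    rw [Finset.sum_range_sub' (fun k : ℕ => (1:ℝ) / (k + m + 1)) N]
    norm_num
  simp only [key]
  have : Tendsto (fun N : ℕ => (1:ℝ) / (N + m + 1)) atTop (𝓝 0) := by
    simp only [one_div]
    apply tendsto_inv_atTop_zero.comp
    apply tendsto_atTop_add_const_right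
    exact tendsto_natCast_atTop_atTop.atTop_add tendsto_const_nhds
  simpa using tendsto_const_nhds.sub this

lemma tailSum (j : ℕ) :
    HasSum (fun n : ℕ => if 2^(j+1) ≤ n+1 then (1:ℝ) / ((n + 1) * (n + 2)) else 0)
      (1 / (2^(j+1) : ℕ)) := by
  set m : ℕ := 2^(j+1) - 1 with hm
  have hm1 : m + 1 = 2^(j+1) := Nat.succ_pred_eq_of_pos (Nat.pow_pos (by norm_num))
  set f : ℕ → ℝ := fun n => if 2^(j+1) ≤ n+1 then (1:ℝ) / ((n + 1) * (n + 2)) else 0 with hf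
  rw [← hasSum_nat_add_iff' m]
  have h1 : ∀ n : ℕ, f (n + m) = (1:ℝ) / ((n + m + 1) * (n + m + 2)) := by
    intro n
    have : 2^(j+1) ≤ n + m + 1 := by omega
    simp only [hf, if_pos this]
    push_cast; ring_nf
  have h2 : ∑ i ∈ Finset.range m, f i = 0 := by
    apply Finset.sum_eq_zero
    intro i hi
    have : ¬ 2^(j+1) ≤ i + 1 := by
      rw [Finset.mem_range] at hi; omega
    simp [hf, this]
  rw [h2, sub_zero]
  have := telescope m
  simp only [h1]
  convert this using 2
  · rfl
  rw [← hm1]; push_cast; ring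

noncomputable def F (j n : ℕ) : ℝ := if 2^(j+1) ≤ n+1 then (1:ℝ) / ((n + 1) * (n + 2)) else 0

lemma F_nonneg (j n : ℕ) : 0 ≤ F j n := by
  unfold F; split <;> positivity

/-- Step A: for fixed n, summing indicators over j recovers the log. -/
lemma stepA (n : ℕ) :
    (∑' j : ℕ, ENNReal.ofReal (F j n))
      = (Nat.log 2 (n+1) : ℝ≥0∞) * ENNReal.ofReal ((1:ℝ) / ((n + 1) * (n + 2))) := by
  set L := Nat.log 2 (n+1) with hL
  have hcond : ∀ j : ℕ, (2^(j+1) ≤ n+1 ↔ j < L) := by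
    intro j
    rw [hL, ← Nat.le_log_iff_pow_le (by norm_num) (by omega : n+1 ≠ 0)]
    omega
  rw [tsum_eq_sum (s := Finset.range L) (by
    intro j hj
    have : ¬ 2^(j+1) ≤ n+1 := by rw [hcond]; simpa using hj
    simp [F, this])]
  have heq : ∀ j ∈ Finset.range L, ENNReal.ofReal (F j n)
      = ENNReal.ofReal ((1:ℝ) / ((n + 1) * (n + 2))) := by
    intro j hj
    have : 2^(j+1) ≤ n+1 := (hcond j).2 (Finset.mem_range.1 hj)
    simp [F, this]
  rw [Finset.sum_congr rfl heq, Finset.sum_const, nsmul_eq_mul, Finset.card_range]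

/-- The ENNReal master computation. -/
lemma master :
    (∑' n : ℕ, (Nat.log 2 (n+1) : ℝ≥0∞) * ENNReal.ofReal ((1:ℝ) / ((n + 1) * (n + 2)))) = 1 := by
  have swap : (∑' n : ℕ, ∑' j : ℕ, ENNReal.ofReal (F j n))
      = ∑' j : ℕ, ∑' n : ℕ, ENNReal.ofReal (F j n) := ENNReal.tsum_comm
  calc (∑' n : ℕ, (Nat.log 2 (n+1) : ℝ≥0∞) * ENNReal.ofReal ((1:ℝ) / ((n + 1) * (n + 2))))
      = ∑' n : ℕ, ∑' j : ℕ, ENNReal.ofReal (F j n) := by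
        exact tsum_congr fun n => (stepA n).symm
    _ = ∑' j : ℕ, ∑' n : ℕ, ENNReal.ofReal (F j n) := swap
    _ = ∑' j : ℕ, ENNReal.ofReal ((1:ℝ) / (2^(j+1) : ℕ)) := by
        refine tsum_congr fun j => ?_
        rw [← ENNReal.ofReal_tsum_of_nonneg (F_nonneg j) (tailSum j).summable]
        rw [show (∑' n, F j n) = 1/((2^(j+1):ℕ):ℝ) from (tailSum j).tsum_eq]
    _ = ∑' j : ℕ, ((2:ℝ≥0∞))⁻¹ ^ (j+1) := by
        refine tsum_congr fun j => ?_
        rw [one_div, ENNReal.ofReal_inv_of_pos (by positivity)]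
        push_cast
        rw [ENNReal.ofReal_pow (by norm_num), ← ENNReal.inv_pow]
        norm_num
    _ = 1 := by
        rw [ENNReal.tsum_geometric_add_one]
        rw [ENNReal.one_sub_inv_two]
        rw [inv_inv]
        exact ENNReal.inv_mul_cancel (two_ne_zero) (ofNat_ne_top)

lemma hc : HasSum (fun n : ℕ => (1:ℝ) / ((n + 1) * (n + 2))) 1 := by
  have := telescope 0
  simpa using this

/-- `Σ_{n=1}^∞ ⌊log₂ n⌋/(n(n+1)) = 1`, where `⌊log₂ n⌋ = Nat.log 2 n` is the
integer part of `log₂ n`; equivalently `Σ_{n=1}^∞ (⌊log₂ n⌋+1)/(n(n+1)) = 2`. -/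
theorem tsum_log2_div_eq_one :
    (∑' n : ℕ, (Nat.log 2 (n + 1) : ℝ) / ((n + 1) * (n + 2))) = 1 ∧
    (∑' n : ℕ, ((Nat.log 2 (n + 1) : ℝ) + 1) / ((n + 1) * (n + 2))) = 2 := by
  set T : ℕ → ℝ := fun n => (Nat.log 2 (n + 1) : ℝ) / ((n + 1) * (n + 2)) with hT
  have hTnn : ∀ n, 0 ≤ T n := fun n => by positivity
  have hg : ∀ n : ℕ, ENNReal.ofReal (T n)
      = (Nat.log 2 (n+1) : ℝ≥0∞) * ENNReal.ofReal ((1:ℝ) / ((n + 1) * (n + 2))) := by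
    intro n
    show ENNReal.ofReal ((Nat.log 2 (n + 1) : ℝ) / (((n:ℝ) + 1) * ((n:ℝ) + 2))) = _
    rw [show (Nat.log 2 (n + 1) : ℝ) / (((n:ℝ) + 1) * ((n:ℝ) + 2))
        = (Nat.log 2 (n + 1) : ℝ) * ((1:ℝ) / (((n:ℝ) + 1) * ((n:ℝ) + 2))) by ring]
    rw [ENNReal.ofReal_mul (by positivity), ENNReal.ofReal_natCast]
  have hsum : (∑' n : ℕ, ENNReal.ofReal (T n)) = 1 := by
    rw [tsum_congr hg]; exact master
  have htoReal : ∀ n : ℕ, (ENNReal.ofReal (T n)).toReal = T n :=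
    fun n => ENNReal.toReal_ofReal (hTnn n)
  have hTsummable : Summable T := by
    have := ENNReal.summable_toReal (f := fun n => ENNReal.ofReal (T n)) (by rw [hsum]; simp)
    simpa only [htoReal] using this
  have part1 : (∑' n : ℕ, T n) = 1 := by
    have := ENNReal.tsum_toReal_eq (f := fun n => ENNReal.ofReal (T n))
      (fun n => ENNReal.ofReal_ne_top)
    simp only [htoReal] at this
    rw [← this, hsum]
    simp
  refine ⟨part1, ?_⟩
  have hsplit : ∀ n : ℕ, ((Nat.log 2 (n + 1) : ℝ) + 1) / ((n + 1) * (n + 2))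
      = T n + (1:ℝ) / ((n + 1) * (n + 2)) := by
    intro n
    show _ = (Nat.log 2 (n + 1) : ℝ) / (((n:ℝ) + 1) * ((n:ℝ) + 2)) + _
    ring
  rw [tsum_congr hsplit, Summable.tsum_add hTsummable hc.summable, part1, hc.tsum_eq]
  norm_num
end

section
/- Let g : (0,1] → ℝ be Riemann integrable on (0,1] with |g(x)| ≤ M|log x|^k for x near 0 (some M, k ≥ 1), and let q ∈ ℕ and F ⊆ {1,…,q}. Then lim_{N→∞} (1/N) Σ_{m ≥ 1, m mod q ∈ F} g(m/N) = (|F|/q) ∫_0^1 g(x) dx, where the sum is over positive integers m ≤ N congruent mod q to an element of F. -/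
set_option maxHeartbeats 2000000

open Filter MeasureTheory


lemma log_pow_le (k : ℕ) (hk : 1 ≤ k) {x : ℝ} (hx : x ∈ Set.Ioc (0:ℝ) 1) :
    |Real.log x| ^ k ≤ ((2*k : ℝ)) ^ k * x ^ (-(1/2) : ℝ) := by
  obtain ⟨hx0, hx1⟩ := hx
  have ht : (0:ℝ) < x⁻¹ := by positivity
  have hlog : |Real.log x| = Real.log x⁻¹ := by
    rw [Real.log_inv, abs_of_nonpos (Real.log_nonpos hx0.le hx1)]
  have hkk : (0:ℝ) < 2*k := by positivity
  have h1 : Real.log x⁻¹ ≤ (2*k) * (x⁻¹ ^ (1/(2*(k:ℝ)) : ℝ)) := by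
    have := Real.log_rpow ht (1/(2*(k:ℝ)))
    have h2 : Real.log (x⁻¹ ^ (1/(2*(k:ℝ)) : ℝ)) ≤ x⁻¹ ^ (1/(2*(k:ℝ)) : ℝ) :=
      (Real.log_le_sub_one_of_pos (Real.rpow_pos_of_pos ht _)).trans (by linarith)
    calc Real.log x⁻¹ = (2*k) * Real.log (x⁻¹ ^ (1/(2*(k:ℝ)) : ℝ)) := by
            rw [this]; field_simp
      _ ≤ (2*k) * (x⁻¹ ^ (1/(2*(k:ℝ)) : ℝ)) := by
            exact mul_le_mul_of_nonneg_left h2 hkk.le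
  have hnn : 0 ≤ Real.log x⁻¹ := Real.log_nonneg (by
    rw [le_inv_comm₀ one_pos hx0] <;> simpa using hx1)
  calc |Real.log x| ^ k ≤ ((2*k) * (x⁻¹ ^ (1/(2*(k:ℝ)) : ℝ))) ^ k := by
        rw [hlog]; exact pow_le_pow_left₀ hnn (by exact h1) k
    _ = (2*k:ℝ)^k * x ^ (-(1/2) : ℝ) := by
        rw [mul_pow, ← Real.rpow_natCast (x⁻¹ ^ (1/(2*(k:ℝ)) : ℝ)) k, ← Real.rpow_mul ht.le,
          ← Real.rpow_neg_one x, ← Real.rpow_mul hx0.le]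
        congr 1
        have : (k:ℝ) ≠ 0 := Nat.cast_ne_zero.mpr (by omega)
        field_simp


lemma integrable_dom (k : ℕ) (hk : 1 ≤ k) (C M : ℝ) :
    IntegrableOn (fun x => C + M * |Real.log x| ^ k) (Set.Ioc (0:ℝ) 1) := by
  have h1 : IntegrableOn (fun x : ℝ => x ^ (-(1/2):ℝ)) (Set.Ioc (0:ℝ) 1) := by
    have := intervalIntegral.intervalIntegrable_rpow' (a := 0) (b := 1) (r := -(1/2)) (by norm_num)
    rwa [intervalIntegrable_iff, Set.uIoc_of_le zero_le_one] at this
  have h2 : IntegrableOn (fun x : ℝ => |Real.log x| ^ k) (Set.Ioc (0:ℝ) 1) := by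
    apply Integrable.mono (h1.const_mul ((2*k:ℝ)^k))
      ((Real.measurable_log.abs.pow_const k).aestronglyMeasurable)
    rw [ae_restrict_iff' measurableSet_Ioc]
    filter_upwards with x hx
    rw [Real.norm_eq_abs, Real.norm_eq_abs, abs_of_nonneg (by positivity),
      abs_of_nonneg (mul_nonneg (by positivity) (Real.rpow_nonneg hx.1.le _))]
    exact log_pow_le k hk hx
  exact (integrableOn_const measure_Ioc_lt_top.ne).add (h2.const_mul M)


/-- index helper: smallest `m ≡ w [MOD q]`, `m ≥ w`, with `m ≥ c`. -/
def stepNat (q w c : ℕ) : ℕ := w + ((c - w + q - 1)/q) * q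

lemma stepNat_ge_w (q w c : ℕ) : w ≤ stepNat q w c := Nat.le_add_right _ _

lemma stepNat_mod (q w c : ℕ) : stepNat q w c % q = w % q := by
  unfold stepNat; rw [Nat.add_mul_mod_self_right]

lemma stepNat_ge (q w c : ℕ) (hq : 0 < q) : c ≤ stepNat q w c := by
  unfold stepNat
  rcases le_or_gt c w with h | h
  · omega
  · have hd : 1 ≤ c - w := by omega
    have h1 : c - w + q - 1 = (c - w - 1) + q := by omega
    rw [h1, Nat.add_div_right _ hq, add_mul, one_mul]
    have h2 := Nat.div_add_mod (c - w - 1) q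
    have h3 := Nat.mod_lt (c - w - 1) hq
    have h4 : (c - w - 1)/q * q = q * ((c - w - 1)/q) := Nat.mul_comm _ _
    rw [h4]
    generalize q * ((c - w - 1)/q) = A at *
    omega

lemma stepNat_le (q w c : ℕ) (hq : 0 < q) (hw2 : w ≤ q) (hc : 1 ≤ c) :
    stepNat q w c ≤ c + q - 1 := by
  unfold stepNat
  rcases le_or_gt c w with h | h
  · have : c - w = 0 := by omega
    rw [this]
    have : 0 + q - 1 < q := by omega
    rw [Nat.div_eq_of_lt this]
    omega
  · have h5 := Nat.div_mul_le_self (c - w + q - 1) q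
    omega

/-- if `w + (j-1) q < c ≤ w + j q` (with `c ≤ w` for `j = 0`) then `stepNat = w + j q`. -/
lemma stepNat_eq_of_le (q w c : ℕ) (hq : 0 < q) (hc : c ≤ w) : stepNat q w c = w := by
  unfold stepNat
  have h0 : c - w = 0 := by omega
  rw [h0]
  have : 0 + q - 1 < q := by omega
  rw [Nat.div_eq_of_lt this]
  omega

lemma stepNat_eq (q w c j : ℕ) (hq : 0 < q) (hlo : w + j * q < c) (hhi : c ≤ w + (j+1) * q) :
    stepNat q w c = w + (j+1) * q := by
  unfold stepNat
  have h1 : (j+1) * q ≤ c - w + q - 1 := by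
    have : j * q + 1 ≤ c - w := by omega
    calc (j+1) * q = j * q + q := by ring
      _ ≤ c - w + q - 1 := by omega
  have h2 : c - w + q - 1 < (j+1+1) * q := by
    have hcw : c - w ≤ (j+1) * q := by omega
    have : (j + 1 + 1) * q = (j+1) * q + q := by ring
    omega
  rw [Nat.div_eq_of_lt_le h1 h2]


lemma reindex (q : ℕ) (hq : 0 < q) (w : ℕ) (hw1 : 1 ≤ w) (hw2 : w ≤ q) (N : ℕ) (f : ℕ → ℝ) :
    ∑ m ∈ Finset.Icc 1 N, (if m % q = w % q then f m else 0)
      = ∑ j ∈ Finset.range (if w ≤ N then (N - w)/q + 1 else 0), f (w + j*q) := by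
  rw [← Finset.sum_filter]
  have hset : (Finset.Icc 1 N).filter (fun m => m % q = w % q)
      = (Finset.range (if w ≤ N then (N - w)/q + 1 else 0)).image (fun j => w + j*q) := by
    ext m
    simp only [Finset.mem_filter, Finset.mem_Icc, Finset.mem_image, Finset.mem_range]
    constructor
    · rintro ⟨⟨h1, h2⟩, h3⟩
      have hmw : w ≤ m := by
        rcases eq_or_lt_of_le hw2 with h | h
        · have hq0 : m % q = 0 := by rw [h3, h, Nat.mod_self]
          have : q ∣ m := Nat.dvd_of_mod_eq_zero hq0
          have := Nat.le_of_dvd h1 this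
          omega
        · have := Nat.mod_eq_of_lt h
          have hle := Nat.mod_le m q
          omega
      have hdvd : q ∣ (m - w) :=
        Nat.dvd_of_mod_eq_zero (Nat.sub_mod_eq_zero_of_mod_eq h3)
      refine ⟨(m - w)/q, ?_, ?_⟩
      · rw [if_pos (hmw.trans h2)]
        have := Nat.div_le_div_right (c := q) (Nat.sub_le_sub_right h2 w)
        omega
      · rw [Nat.div_mul_cancel hdvd]; omega
    · rintro ⟨j, hj, rfl⟩
      rw [Nat.add_mul_mod_self_right]
      by_cases hwN : w ≤ N
      · rw [if_pos hwN] at hj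
        have hj' : j ≤ (N - w)/q := by omega
        have : j * q ≤ (N - w)/q * q := Nat.mul_le_mul_right q hj'
        have h2 := Nat.div_mul_le_self (N - w) q
        exact ⟨⟨by omega, by omega⟩, rfl⟩
      · rw [if_neg hwN] at hj; omega
  rw [hset, Finset.sum_image]
  intro a _ b _ hab
  have h : a * q = b * q := by simp only at hab; omega
  exact Nat.eq_of_mul_eq_mul_right hq h


lemma per_residue (g : ℝ → ℝ) (M : ℝ) (k : ℕ) (hk : 1 ≤ k)
    (δ : ℝ) (hδ : 0 < δ)
    (hbound : ∀ x ∈ Set.Ioc (0 : ℝ) δ, |g x| ≤ M * |Real.log x| ^ k)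
    (hcont : ∀ᵐ x ∂(volume.restrict (Set.Ioc (0 : ℝ) 1)), ContinuousAt g x)
    (hlocbdd : ∀ δ' ∈ Set.Ioc (0 : ℝ) 1, ∃ C : ℝ, ∀ x ∈ Set.Icc δ' 1, |g x| ≤ C)
    (q : ℕ) (hq : 0 < q) (w : ℕ) (hw1 : 1 ≤ w) (hw2 : w ≤ q) :
    Tendsto (fun N : ℕ => (1 / (N:ℝ)) * ∑ j ∈ Finset.range (if w ≤ N then (N - w)/q + 1 else 0),
        g (((w + j*q : ℕ) : ℝ) / (N:ℝ))) atTop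
      (nhds ((1/(q:ℝ)) * ∫ x in Set.Ioc (0:ℝ) 1, g x)) := by
  -- basic constants
  set δ₀ : ℝ := min δ 1 with hδ₀def
  have hδ₀pos : 0 < δ₀ := lt_min hδ one_pos
  have hδ₀le1 : δ₀ ≤ 1 := min_le_right _ _
  have hδ₀leδ : δ₀ ≤ δ := min_le_left _ _
  obtain ⟨C, hC⟩ := hlocbdd δ₀ ⟨hδ₀pos, hδ₀le1⟩
  have hC0 : 0 ≤ C := (abs_nonneg _).trans (hC 1 ⟨hδ₀le1, le_refl 1⟩)
  have hM0 : 0 ≤ M := by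
    have hx : δ₀/2 ∈ Set.Ioc (0:ℝ) δ := ⟨by positivity, by linarith⟩
    have h1 := hbound _ hx
    have h2 : Real.log (δ₀/2) < 0 := Real.log_neg (by positivity) (by linarith)
    have h3 : 0 < |Real.log (δ₀/2)| ^ k := pow_pos (abs_pos.mpr h2.ne) k
    nlinarith [abs_nonneg (g (δ₀/2))]
  -- monotonicity of |log| on (0,1]
  have hlogmono : ∀ x y : ℝ, 0 < x → x ≤ y → y ≤ 1 → |Real.log y| ≤ |Real.log x| := by
    intro x y hx hxy hy1
    rw [abs_of_nonpos (Real.log_nonpos (by linarith) hy1),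
      abs_of_nonpos (Real.log_nonpos hx.le (by linarith))]
    have := Real.log_le_log (by positivity) hxy
    linarith
  -- the approximating step functions
  set G : ℕ → ℝ → ℝ := fun N x =>
    if stepNat q w ⌈(N:ℝ)*x⌉₊ ≤ N then g ((stepNat q w ⌈(N:ℝ)*x⌉₊ : ℝ)/N) else 0 with hGdef
  set bound : ℝ → ℝ := fun x => C + M * |Real.log x| ^ k with hbdddef
  -- bounds on the step value
  have hstep_lb : ∀ (N : ℕ) (x : ℝ), 0 ≤ x → (N:ℝ) * x ≤ (stepNat q w ⌈(N:ℝ)*x⌉₊ : ℝ) := by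
    intro N x hx
    have h1 := Nat.le_ceil ((N:ℝ)*x)
    have h2 := stepNat_ge q w ⌈(N:ℝ)*x⌉₊ hq
    exact h1.trans (Nat.cast_le.mpr h2)
  have hstep_ub : ∀ (N : ℕ) (x : ℝ), 0 < x → 1 ≤ N →
      (stepNat q w ⌈(N:ℝ)*x⌉₊ : ℝ) ≤ (N:ℝ) * x + q := by
    intro N x hx hN
    have hNx : (0:ℝ) < (N:ℝ)*x := by
      have : (0:ℝ) < (N:ℝ) := by exact_mod_cast hN
      positivity
    have hc1 : 1 ≤ ⌈(N:ℝ)*x⌉₊ := Nat.one_le_ceil_iff.mpr hNx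
    have h2 := stepNat_le q w ⌈(N:ℝ)*x⌉₊ hq hw2 hc1
    have h3 : (⌈(N:ℝ)*x⌉₊ : ℝ) < (N:ℝ)*x + 1 := Nat.ceil_lt_add_one hNx.le
    have h4 : (stepNat q w ⌈(N:ℝ)*x⌉₊ : ℝ) ≤ ((⌈(N:ℝ)*x⌉₊ + q - 1 : ℕ) : ℝ) :=
      Nat.cast_le.mpr h2
    have h6 : 1 ≤ ⌈(N:ℝ)*x⌉₊ + q := by omega
    rw [Nat.cast_sub h6, Nat.cast_add, Nat.cast_one] at h4
    push_cast at h4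
    linarith
  -- measurability
  have hmeas : ∀ N, AEStronglyMeasurable (G N) (volume.restrict (Set.Ioc (0:ℝ) 1)) := by
    intro N
    have : G N = (fun c : ℕ => if stepNat q w c ≤ N then g ((stepNat q w c : ℝ)/N) else 0)
        ∘ (fun x : ℝ => ⌈(N:ℝ)*x⌉₊) := rfl
    rw [this]
    exact ((measurable_from_top).comp
      (Nat.measurable_ceil.comp (measurable_id.const_mul _))).aestronglyMeasurable
  -- domination
  have hbd : ∀ N, ∀ᵐ x ∂(volume.restrict (Set.Ioc (0:ℝ) 1)), ‖G N x‖ ≤ bound x := by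
    intro N
    rw [ae_restrict_iff' measurableSet_Ioc]
    filter_upwards with x hx
    obtain ⟨hx0, hx1⟩ := hx
    have hbnn : 0 ≤ M * |Real.log x| ^ k := by positivity
    by_cases hs : stepNat q w ⌈(N:ℝ)*x⌉₊ ≤ N
    · have hN1 : 1 ≤ N := le_trans (hw1.trans (stepNat_ge_w q w _)) hs
      have hNpos : (0:ℝ) < N := by exact_mod_cast (by omega : 0 < N)
      have hGx : G N x = g ((stepNat q w ⌈(N:ℝ)*x⌉₊ : ℝ)/N) := by
        simp only [hGdef]; rw [if_pos hs]
      have hxy : x ≤ (stepNat q w ⌈(N:ℝ)*x⌉₊ : ℝ)/N := by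
        rw [le_div_iff₀ hNpos]
        have := hstep_lb N x hx0.le
        linarith [mul_comm x (N:ℝ)]
      have hy1 : (stepNat q w ⌈(N:ℝ)*x⌉₊ : ℝ)/N ≤ 1 := by
        rw [div_le_one hNpos]; exact_mod_cast hs
      have hy0 : 0 < (stepNat q w ⌈(N:ℝ)*x⌉₊ : ℝ)/N := lt_of_lt_of_le hx0 hxy
      rw [hGx, Real.norm_eq_abs]
      by_cases hyδ : (stepNat q w ⌈(N:ℝ)*x⌉₊ : ℝ)/N ≤ δ₀
      · have h1 := hbound _ ⟨hy0, hyδ.trans hδ₀leδ⟩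
        have h2 : |Real.log ((stepNat q w ⌈(N:ℝ)*x⌉₊ : ℝ)/N)| ≤ |Real.log x| :=
          hlogmono x _ hx0 hxy hy1
        have h3 : |Real.log ((stepNat q w ⌈(N:ℝ)*x⌉₊ : ℝ)/N)|^k ≤ |Real.log x|^k :=
          pow_le_pow_left₀ (abs_nonneg _) h2 k
        have h4 : M * |Real.log ((stepNat q w ⌈(N:ℝ)*x⌉₊ : ℝ)/N)|^k ≤ M * |Real.log x|^k :=
          mul_le_mul_of_nonneg_left h3 hM0
        simp only [hbdddef]
        linarith
      · have h1 := hC _ ⟨(not_le.mp hyδ).le, hy1⟩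
        simp only [hbdddef]
        linarith
    · have hGx : G N x = 0 := by simp only [hGdef]; rw [if_neg hs]
      rw [hGx, norm_zero]
      simp only [hbdddef]
      linarith
  -- pointwise convergence
  have hlim : ∀ᵐ x ∂(volume.restrict (Set.Ioc (0:ℝ) 1)),
      Tendsto (fun N => G N x) atTop (nhds (g x)) := by
    have h1 : ∀ᵐ x ∂(volume.restrict (Set.Ioc (0:ℝ) 1)), x ∈ Set.Ioc (0:ℝ) 1 :=
      ae_restrict_mem measurableSet_Ioc
    have h2 : ∀ᵐ x : ℝ ∂(volume.restrict (Set.Ioc (0:ℝ) 1)), x ≠ 1 := by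
      refine ae_restrict_of_ae ?_
      have : volume ({(1:ℝ)} : Set ℝ) = 0 := Real.volume_singleton
      rw [ae_iff]
      convert this using 2
      ext y; simp
    filter_upwards [hcont, h1, h2] with x hgx hxmem hxne
    obtain ⟨hx0, hxle1⟩ := hxmem
    have hxlt1 : x < 1 := lt_of_le_of_ne hxle1 hxne
    have htend : Tendsto (fun N : ℕ => (stepNat q w ⌈(N:ℝ)*x⌉₊ : ℝ)/N) atTop (nhds x) := by
      apply tendsto_of_tendsto_of_tendsto_of_le_of_le' (g := fun _ : ℕ => x)
        (h := fun N : ℕ => x + (q:ℝ)/N) tendsto_const_nhds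
      · have : Tendsto (fun N : ℕ => (q:ℝ)/N) atTop (nhds 0) :=
          tendsto_const_div_atTop_nhds_zero_nat _
        simpa using tendsto_const_nhds.add this
      · filter_upwards [eventually_ge_atTop 1] with N hN1
        have hNpos : (0:ℝ) < N := by exact_mod_cast (by omega : 0 < N)
        rw [le_div_iff₀ hNpos]
        have := hstep_lb N x hx0.le
        linarith [mul_comm x (N:ℝ)]
      · filter_upwards [eventually_ge_atTop 1] with N hN1
        have hNpos : (0:ℝ) < N := by exact_mod_cast (by omega : 0 < N)
        have h6 := hstep_ub N x hx0 hN1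
        have h7 : (stepNat q w ⌈(N:ℝ)*x⌉₊ : ℝ)/N ≤ ((N:ℝ)*x + q)/N := by gcongr
        have h8 : ((N:ℝ)*x + q)/N = x + (q:ℝ)/N := by
          field_simp
        simpa [h8] using h7
    have hev : ∀ᶠ N : ℕ in atTop, stepNat q w ⌈(N:ℝ)*x⌉₊ ≤ N := by
      have hpos : (0:ℝ) < 1 - x := by linarith
      have h3 : Tendsto (fun N : ℕ => (N:ℝ)*(1-x)) atTop atTop :=
        Tendsto.atTop_mul_const hpos tendsto_natCast_atTop_atTop
      filter_upwards [h3.eventually_ge_atTop (q:ℝ), eventually_ge_atTop 1] with N hNq hN1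
      have h4 := hstep_ub N x hx0 hN1
      have h5 : (stepNat q w ⌈(N:ℝ)*x⌉₊ : ℝ) ≤ (N:ℝ) := by nlinarith
      exact_mod_cast h5
    have hcomp : Tendsto (fun N : ℕ => g ((stepNat q w ⌈(N:ℝ)*x⌉₊ : ℝ)/N)) atTop
        (nhds (g x)) := hgx.tendsto.comp htend
    apply hcomp.congr'
    filter_upwards [hev] with N hN
    simp only [hGdef]
    rw [if_pos hN]
  have hDCT : Tendsto (fun N => ∫ x in Set.Ioc (0:ℝ) 1, G N x) atTop
      (nhds (∫ x in Set.Ioc (0:ℝ) 1, g x)) :=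
    tendsto_integral_of_dominated_convergence bound hmeas (integrable_dom k hk C M) hbd hlim
  -- value of the integral of G N for large N
  have hEq : ∀ N : ℕ, w + q ≤ N →
      ∫ x in Set.Ioc (0:ℝ) 1, G N x
        = ((q:ℝ)/N) * ∑ j ∈ Finset.range ((N - w)/q + 1), g (((w + j*q : ℕ) : ℝ) / (N:ℝ))
          - (((q:ℝ) - w)/N) * g ((w:ℝ)/N) := by
    intro N hN
    have hwN : w ≤ N := by omega
    have hN1 : 1 ≤ N := by omega
    have hNpos : (0:ℝ) < N := by exact_mod_cast (by omega : 0 < N)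
    have hqpos : (0:ℝ) < q := by exact_mod_cast hq
    set J : ℕ := (N - w)/q + 1 with hJdef
    set p : ℕ → ℝ := fun j => if j = 0 then 0 else ((w + (j-1)*q : ℕ) : ℝ)/N with hpdef
    -- the largest selected point is ≤ N
    have hmlast : w + (J-1)*q ≤ N := by
      have h1 : (N - w)/q * q ≤ N - w := Nat.div_mul_le_self _ _
      simp only [hJdef, Nat.add_sub_cancel]
      generalize hA : (N-w)/q * q = A at h1 ⊢
      omega
    have hsel_le : ∀ j, j < J → w + j*q ≤ N := by
      intro j hj
      have : j ≤ J - 1 := by omega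
      have h2 : j * q ≤ (J-1) * q := Nat.mul_le_mul_right q this
      calc w + j*q ≤ w + (J-1)*q := Nat.add_le_add_left h2 w
        _ ≤ N := hmlast
    -- monotonicity of endpoints
    have hpmono : ∀ j : ℕ, p j ≤ p (j+1) := by
      intro j
      rcases j with _ | j'
      · simp only [hpdef, if_pos rfl, if_neg (Nat.succ_ne_zero 0)]
        positivity
      · simp only [hpdef, if_neg (Nat.succ_ne_zero j'), if_neg (Nat.succ_ne_zero (j'+1)),
          Nat.add_sub_cancel]
        have hle : ((w + j'*q : ℕ) : ℝ) ≤ ((w + (j'+1)*q : ℕ) : ℝ) := by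
          exact_mod_cast Nat.add_le_add_left (Nat.mul_le_mul_right q (Nat.le_succ j')) w
        exact div_le_div_of_nonneg_right hle hNpos.le
    have hp0 : p 0 = 0 := by simp [hpdef]
    have hpJ_le1 : p J ≤ 1 := by
      have hJ0 : J ≠ 0 := by rw [hJdef]; exact Nat.succ_ne_zero _
      simp only [hpdef, if_neg hJ0]
      rw [div_le_one hNpos]
      exact_mod_cast hmlast
    have hpm : Monotone p := monotone_nat_of_le_succ hpmono
    have hpnonneg : ∀ j, 0 ≤ p j := by
      intro j
      induction j with
      | zero => rw [hp0]
      | succ n ih => exact ih.trans (hpmono n)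
    -- G N is constant on each piece
    have hconst : ∀ j, j < J → ∀ x ∈ Set.Ioc (p j) (p (j+1)),
        G N x = g (((w + j*q : ℕ):ℝ)/N) := by
      intro j hj x hx
      obtain ⟨hxl, hxr⟩ := hx
      have hsle : w + j*q ≤ N := hsel_le j hj
      have hstep : stepNat q w ⌈(N:ℝ)*x⌉₊ = w + j*q := by
        rcases j with _ | j'
        · -- x ∈ (0, w/N]
          rw [hp0] at hxl
          have hxr' : (N:ℝ)*x ≤ w := by
            simp only [hpdef, if_neg (Nat.succ_ne_zero 0), Nat.add_sub_cancel] at hxr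
            rw [le_div_iff₀ hNpos] at hxr
            push_cast at hxr
            nlinarith [mul_comm x (N:ℝ)]
          have hc : ⌈(N:ℝ)*x⌉₊ ≤ w := Nat.ceil_le.mpr (by exact_mod_cast hxr')
          rw [stepNat_eq_of_le q w _ hq hc]
          simp
        · -- x ∈ ((w+j'q)/N, (w+(j'+1)q)/N]
          have hxl' : ((w + j'*q : ℕ):ℝ) < (N:ℝ)*x := by
            simp only [hpdef, if_neg (Nat.succ_ne_zero j'), Nat.add_sub_cancel] at hxl
            rw [div_lt_iff₀ hNpos] at hxl
            nlinarith [mul_comm x (N:ℝ)]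
          have hxr' : (N:ℝ)*x ≤ ((w + (j'+1)*q : ℕ):ℝ) := by
            simp only [hpdef, if_neg (Nat.succ_ne_zero (j'+1)), Nat.add_sub_cancel] at hxr
            rw [le_div_iff₀ hNpos] at hxr
            nlinarith [mul_comm x (N:ℝ)]
          have hlo : w + j'*q < ⌈(N:ℝ)*x⌉₊ := Nat.lt_ceil.mpr hxl'
          have hhi : ⌈(N:ℝ)*x⌉₊ ≤ w + (j'+1)*q := Nat.ceil_le.mpr (by
            have hnn : (0:ℝ) ≤ (N:ℝ)*x := by
              have hx0 : 0 < x := lt_of_le_of_lt (hpnonneg _) hxl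
              positivity
            exact_mod_cast hxr')
          exact stepNat_eq q w _ j' hq hlo hhi
      simp only [hGdef]
      rw [hstep, if_pos hsle]
    -- G N vanishes on the tail
    have htail0 : ∀ x ∈ Set.Ioc (p J) 1, G N x = 0 := by
      intro x hx
      obtain ⟨hxl, hxr⟩ := hx
      have hJ0 : J ≠ 0 := by rw [hJdef]; exact Nat.succ_ne_zero _
      have hxl' : ((w + (J-1)*q : ℕ):ℝ) < (N:ℝ)*x := by
        simp only [hpdef, if_neg hJ0] at hxl
        rw [div_lt_iff₀ hNpos] at hxl
        nlinarith [mul_comm x (N:ℝ)]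
      have hlo : w + (J-1)*q < ⌈(N:ℝ)*x⌉₊ := Nat.lt_ceil.mpr hxl'
      have hsg : N < stepNat q w ⌈(N:ℝ)*x⌉₊ := by
        rcases le_or_gt (⌈(N:ℝ)*x⌉₊) (w + ((J-1)+1)*q) with h | h
        · rw [stepNat_eq q w _ (J-1) hq hlo h]
          have h2 := Nat.lt_div_mul_add (a := N - w) hq
          have h3 : (J - 1 + 1) * q = (N-w)/q * q + q := by
            simp only [hJdef, Nat.add_sub_cancel]
            ring
          omega
        · have h4 := stepNat_ge q w ⌈(N:ℝ)*x⌉₊ hq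
          have h5 : w + (J-1+1)*q > N := by
            have h2 := Nat.lt_div_mul_add (a := N - w) hq
            have h3 : (J - 1 + 1) * q = (N-w)/q * q + q := by
              simp only [hJdef, Nat.add_sub_cancel]
              ring
            omega
          omega
      simp only [hGdef]
      rw [if_neg (by omega)]
    -- integrability of G N on subintervals
    have hGint : IntegrableOn (G N) (Set.Ioc (0:ℝ) 1) := by
      apply Integrable.mono (integrable_dom k hk C M) (hmeas N)
      filter_upwards [hbd N] with x hx
      exact hx.trans (by rw [Real.norm_eq_abs]; exact le_abs_self _)
    have hii : ∀ j, j < J → IntervalIntegrable (G N) volume (p j) (p (j+1)) := by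
      intro j hj
      rw [intervalIntegrable_iff, Set.uIoc_of_le (hpmono j)]
      apply hGint.mono_set
      intro x hx
      refine ⟨lt_of_le_of_lt (hpnonneg j) hx.1, hx.2.trans ?_⟩
      exact (hpm hj).trans hpJ_le1
    -- value of each piece integral
    have hpiece : ∀ j ∈ Finset.range J, ∫ x in (p j)..(p (j+1)), G N x
        = (p (j+1) - p j) * g (((w + j*q : ℕ):ℝ)/N) := by
      intro j hjm
      have hj := Finset.mem_range.mp hjm
      rw [intervalIntegral.integral_of_le (hpmono j),
        setIntegral_congr_fun measurableSet_Ioc (fun x hx => hconst j hj x hx),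
        setIntegral_const, Real.volume_real_Ioc_of_le (hpmono j),
        smul_eq_mul]
    have hsum : ∑ j ∈ Finset.range J, ∫ x in (p j)..(p (j+1)), G N x
        = ∫ x in (p 0)..(p J), G N x :=
      intervalIntegral.sum_integral_adjacent_intervals (fun j hj => hii j hj)
    have htail : ∫ x in (p J)..(1:ℝ), G N x = 0 := by
      rw [intervalIntegral.integral_of_le hpJ_le1,
        setIntegral_congr_fun measurableSet_Ioc (fun x hx => htail0 x hx)]
      simp
    have hiiJ1 : IntervalIntegrable (G N) volume (p J) 1 := by
      rw [intervalIntegrable_iff, Set.uIoc_of_le hpJ_le1]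
      exact hGint.mono_set (fun x hx => ⟨lt_of_le_of_lt (hpnonneg J) hx.1, hx.2⟩)
    have hii0J : IntervalIntegrable (G N) volume (p 0) (p J) := by
      rw [intervalIntegrable_iff, Set.uIoc_of_le (hpm (Nat.zero_le J)), hp0]
      exact hGint.mono_set (fun x hx => ⟨hx.1, hx.2.trans hpJ_le1⟩)
    have hadd : (∫ x in (p 0)..(p J), G N x) + ∫ x in (p J)..(1:ℝ), G N x
        = ∫ x in (p 0)..(1:ℝ), G N x :=
      intervalIntegral.integral_add_adjacent_intervals hii0J hiiJ1
    -- algebraic rearrangement of the sum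
    have hsum2 : ∑ j ∈ Finset.range J, (p (j+1) - p j) * g (((w + j*q : ℕ):ℝ)/N)
        = ((q:ℝ)/N) * (∑ j ∈ Finset.range J, g (((w + j*q : ℕ):ℝ)/N))
          - (((q:ℝ) - w)/N) * g ((w:ℝ)/N) := by
      have hterm : ∀ j ∈ Finset.range J, (p (j+1) - p j) * g (((w + j*q : ℕ):ℝ)/N)
          = ((q:ℝ)/N) * g (((w + j*q : ℕ):ℝ)/N)
            + (if j = 0 then (((w:ℝ) - q)/N) * g ((w:ℝ)/N) else 0) := by
        intro j _
        rcases j with _ | j'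
        · have hp1 : p 1 = ((w + 0*q : ℕ):ℝ)/N := by
            simp [hpdef]
          have harg : ((w + 0*q : ℕ):ℝ) = (w:ℝ) := by push_cast; ring
          rw [hp0, hp1, if_pos rfl, harg]
          ring
        · have hpa : p (j'+1) = ((w + j'*q : ℕ):ℝ)/N := by
            simp only [hpdef, if_neg (Nat.succ_ne_zero j'), Nat.add_sub_cancel]
          have hpb : p (j'+1+1) = ((w + (j'+1)*q : ℕ):ℝ)/N := by
            simp only [hpdef, if_neg (Nat.succ_ne_zero (j'+1)), Nat.add_sub_cancel]
          rw [hpa, hpb, if_neg (Nat.succ_ne_zero j')]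
          push_cast
          ring
      rw [Finset.sum_congr rfl hterm, Finset.sum_add_distrib]
      have hone : ∑ j ∈ Finset.range J, (if j = 0 then (((w:ℝ) - q)/N) * g ((w:ℝ)/N) else 0)
          = (((w:ℝ) - q)/N) * g ((w:ℝ)/N) := by
        rw [Finset.sum_ite_eq' (Finset.range J) 0 (fun _ => (((w:ℝ) - q)/N) * g ((w:ℝ)/N))]
        rw [if_pos (Finset.mem_range.mpr (by rw [hJdef]; exact Nat.succ_pos _))]
      rw [hone, ← Finset.mul_sum]
      ring
    -- assemble
    rw [hp0] at hadd hsum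
    calc ∫ x in Set.Ioc (0:ℝ) 1, G N x = ∫ x in (0:ℝ)..(1:ℝ), G N x :=
          (intervalIntegral.integral_of_le zero_le_one).symm
      _ = (∫ x in (0:ℝ)..(p J), G N x) + ∫ x in (p J)..(1:ℝ), G N x := hadd.symm
      _ = ∑ j ∈ Finset.range J, ∫ x in (p j)..(p (j+1)), G N x := by
          rw [htail, add_zero, hsum]
      _ = ∑ j ∈ Finset.range J, (p (j+1) - p j) * g (((w + j*q : ℕ):ℝ)/N) :=
          Finset.sum_congr rfl hpiece
      _ = _ := hsum2
  -- error term tends to zero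
  have hErr : Tendsto (fun N : ℕ => (((q:ℝ) - w)/((q:ℝ) * N)) * g ((w:ℝ)/N)) atTop (nhds 0) := by
    have hlogN : Tendsto (fun N : ℕ => M * (Real.log N ^ k / N)) atTop (nhds 0) := by
      have h1 := (Real.tendsto_pow_log_div_mul_add_atTop 1 0 k one_ne_zero).comp
        tendsto_natCast_atTop_atTop
      have h2 := h1.const_mul M
      simp only [Function.comp, one_mul, add_zero, mul_zero] at h2
      exact h2
    apply squeeze_zero_norm' ?_ hlogN
    have hwδ : Tendsto (fun N : ℕ => (w:ℝ)/N) atTop (nhds 0) :=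
      tendsto_const_div_atTop_nhds_zero_nat _
    filter_upwards [hwδ.eventually (gt_mem_nhds hδ₀pos), eventually_ge_atTop w,
      eventually_ge_atTop 1] with N hNδ hNw hN1
    have hNpos : (0:ℝ) < N := by exact_mod_cast (by omega : 0 < N)
    have hqpos : (0:ℝ) < q := by exact_mod_cast hq
    have hwpos : (0:ℝ) < w := by exact_mod_cast hw1
    have hy0 : (0:ℝ) < (w:ℝ)/N := by positivity
    have hy1 : (w:ℝ)/N ≤ 1 := by
      rw [div_le_one hNpos]; exact_mod_cast hNw
    have hyδ : (w:ℝ)/N ≤ δ -- in Ioc 0 δ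
      := le_trans (le_of_lt hNδ) hδ₀leδ
    have hgb := hbound _ ⟨hy0, hyδ⟩
    have hlog1 : |Real.log ((w:ℝ)/N)| ≤ Real.log N := by
      have h1 : (1:ℝ)/N ≤ (w:ℝ)/N := by gcongr; exact_mod_cast hw1
      have h2 := hlogmono ((1:ℝ)/N) ((w:ℝ)/N) (by positivity) h1 hy1
      have h3 : |Real.log ((1:ℝ)/N)| = Real.log N := by
        rw [one_div, Real.log_inv, abs_neg, abs_of_nonneg]
        exact Real.log_nonneg (by exact_mod_cast hN1)
      rw [h3] at h2
      exact h2
    have hlogNnn : 0 ≤ Real.log N := Real.log_nonneg (by exact_mod_cast hN1)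
    have hlogk : |Real.log ((w:ℝ)/N)| ^ k ≤ Real.log N ^ k :=
      pow_le_pow_left₀ (abs_nonneg _) hlog1 k
    have hcoef : |(((q:ℝ) - w)/((q:ℝ) * N))| ≤ 1/N := by
      rw [abs_of_nonneg (div_nonneg (sub_nonneg.mpr (by exact_mod_cast hw2 : (w:ℝ) ≤ q))
        (by positivity))]
      rw [div_le_div_iff₀ (by positivity) hNpos]
      have : (w:ℝ) ≥ 1 := by exact_mod_cast hw1
      nlinarith
    rw [norm_mul, Real.norm_eq_abs, Real.norm_eq_abs]
    calc |((q:ℝ) - w)/((q:ℝ)*N)| * |g ((w:ℝ)/N)|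
        ≤ (1/N) * (M * Real.log N ^ k) := by
          apply mul_le_mul hcoef _ (abs_nonneg _) (by positivity)
          exact hgb.trans (mul_le_mul_of_nonneg_left hlogk hM0)
      _ = M * (Real.log N ^ k / N) := by ring
  -- assemble
  have hfinal : Tendsto (fun N : ℕ => (1/(q:ℝ)) * (∫ x in Set.Ioc (0:ℝ) 1, G N x)
        + (((q:ℝ) - w)/((q:ℝ) * N)) * g ((w:ℝ)/N)) atTop
      (nhds ((1/(q:ℝ)) * ∫ x in Set.Ioc (0:ℝ) 1, g x)) := by
    have := (hDCT.const_mul (1/(q:ℝ))).add hErr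
    simpa using this
  apply hfinal.congr'
  filter_upwards [eventually_ge_atTop (w + q)] with N hN
  have hwN : w ≤ N := by omega
  have hN1 : (1:ℕ) ≤ N := by omega
  have hNpos : (0:ℝ) < N := by exact_mod_cast (by omega : 0 < N)
  have hqpos : (0:ℝ) < q := by exact_mod_cast hq
  rw [hEq N hN, if_pos hwN]
  field_simp
  ring


/-- let `g : (0,1] → ℝ` be Riemann integrable on `(0,1]` (encoded via the
Lebesgue criterion: a.e. continuous on `(0,1]` and bounded on each `[δ',1]`) with
`|g(x)| ≤ M|log x|^k` near `0`. For `q ∈ ℕ` and `F ⊆ {1,…,q}` (a set of residues mod `q`),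
`(1/N) Σ_{m ≤ N, m mod q ∈ F} g(m/N) → (|F|/q)·∫_0^1 g(x) dx`. -/
theorem riemann_sum_arithmetic_progressions (g : ℝ → ℝ) (M : ℝ) (k : ℕ) (hk : 1 ≤ k)
    (δ : ℝ) (hδ : 0 < δ)
    (hbound : ∀ x ∈ Set.Ioc (0 : ℝ) δ, |g x| ≤ M * |Real.log x| ^ k)
    (hcont : ∀ᵐ x ∂(volume.restrict (Set.Ioc (0 : ℝ) 1)), ContinuousAt g x)
    (hlocbdd : ∀ δ' ∈ Set.Ioc (0 : ℝ) 1, ∃ C : ℝ, ∀ x ∈ Set.Icc δ' 1, |g x| ≤ C)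
    (q : ℕ) (hq : 0 < q) (F : Finset ℕ) (hF : F ⊆ Finset.Icc 1 q) :
    Tendsto
      (fun N : ℕ =>
        (1 / (N : ℝ)) * ∑ m ∈ Finset.Icc 1 N,
          if ∃ v ∈ F, m % q = v % q then g ((m : ℝ) / N) else 0)
      atTop
      (nhds (((F.card : ℝ) / q) * ∫ x in Set.Ioc (0 : ℝ) 1, g x)) := by
  have hinj : ∀ a b : ℕ, a ∈ Finset.Icc 1 q → b ∈ Finset.Icc 1 q → a % q = b % q → a = b := by
    intro a b ha hb hab
    rw [Finset.mem_Icc] at ha hb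
    rcases Nat.lt_or_ge a q with h | h
    · rw [Nat.mod_eq_of_lt h] at hab
      rcases Nat.lt_or_ge b q with h' | h'
      · rw [Nat.mod_eq_of_lt h'] at hab; exact hab
      · have hbq : b = q := le_antisymm hb.2 h'
        rw [hbq, Nat.mod_self] at hab; omega
    · have haq : a = q := le_antisymm ha.2 h
      rw [haq, Nat.mod_self] at hab
      rcases Nat.lt_or_ge b q with h' | h'
      · rw [Nat.mod_eq_of_lt h'] at hab; omega
      · omega
  have hsplit : ∀ N : ℕ, (1 / (N : ℝ)) * ∑ m ∈ Finset.Icc 1 N,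
      (if ∃ v ∈ F, m % q = v % q then g ((m : ℝ) / N) else 0)
      = ∑ v ∈ F, (1 / (N:ℝ)) * ∑ m ∈ Finset.Icc 1 N,
          (if m % q = v % q then g ((m:ℝ)/N) else 0) := by
    intro N
    rw [← Finset.mul_sum]
    congr 1
    rw [Finset.sum_comm]
    apply Finset.sum_congr rfl
    intro m _
    by_cases h : ∃ v ∈ F, m % q = v % q
    · obtain ⟨v₀, hv₀F, hv₀⟩ := h
      rw [if_pos ⟨v₀, hv₀F, hv₀⟩]
      rw [Finset.sum_eq_single v₀]
      · rw [if_pos hv₀]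
      · intro b hbF hbne
        rw [if_neg]
        intro hb
        exact hbne (hinj b v₀ (hF hbF) (hF hv₀F) (by rw [← hb, ← hv₀]))
      · intro h; exact absurd hv₀F h
    · rw [if_neg h]
      refine (Finset.sum_eq_zero ?_).symm
      intro v hv
      rw [if_neg (fun hc => h ⟨v, hv, hc⟩)]
  have hlim : Tendsto (fun N : ℕ => ∑ v ∈ F, (1/(N:ℝ)) * ∑ m ∈ Finset.Icc 1 N,
      (if m % q = v % q then g ((m:ℝ)/N) else 0)) atTop
      (nhds (∑ _v ∈ F, (1/(q:ℝ)) * ∫ x in Set.Ioc (0:ℝ) 1, g x)) := by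
    apply tendsto_finset_sum
    intro v hv
    have hv1 : 1 ≤ v := (Finset.mem_Icc.mp (hF hv)).1
    have hv2 : v ≤ q := (Finset.mem_Icc.mp (hF hv)).2
    have hpr := per_residue g M k hk δ hδ hbound hcont hlocbdd q hq v hv1 hv2
    apply hpr.congr
    intro N
    rw [reindex q hq v hv1 hv2 N (fun m => g ((m:ℝ)/N))]
  have hval : (∑ _v ∈ F, (1/(q:ℝ)) * ∫ x in Set.Ioc (0:ℝ) 1, g x)
      = ((F.card : ℝ)/q) * ∫ x in Set.Ioc (0:ℝ) 1, g x := by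
    rw [Finset.sum_const, nsmul_eq_mul]
    ring
  rw [← hval]
  exact hlim.congr (fun N => (hsplit N).symm)
end
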